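/- arXiv:0806.4497 — 5 statements merged into one kernel-verified Lean document; each statement's English description precedes it below -/
import Mathlib

section
/- For a real symmetric matrix H with resolvent G and i ≠ p, the second derivative of the off-diagonal resolvent entry satisfies ∂²G(i,p)/∂H(p,i)² = 2G(i,p)³ + 6G(i,i)G(p,p)G(i,p), where differentiation with respect to H(p,i) perturbs both symmetric entries (p,i) and (i,p). -/
open Matrix Complex
attribute [local instance] Matrix.linftyOpNormedAddCommGroup Matrix.linftyOpNormedRing
  Matrix.linftyOpNormedAlgebra

variable {N : ℕ}

lemma isHermitian_map' (A : Matrix (Fin N) (Fin N) ℝ) (hA : A.IsSymm) :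
    (A.map Complex.ofReal).IsHermitian := by
  ext a b
  simp [Matrix.conjTranspose_apply, Matrix.map_apply, hA.apply]

lemma isUnit_resolvent (A : Matrix (Fin N) (Fin N) ℝ) (hA : A.IsSymm) (z : ℂ) (hz : z.im ≠ 0) :
    IsUnit (A.map Complex.ofReal - z • (1 : Matrix (Fin N) (Fin N) ℂ)) := by
  set B := A.map Complex.ofReal with hB
  have hherm : B.IsHermitian := isHermitian_map' A hA
  rw [Matrix.isUnit_iff_isUnit_det]
  set U : Matrix (Fin N) (Fin N) ℂ := ↑hherm.eigenvectorUnitary with hU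
  have hUU : U * star U = 1 := Unitary.mul_star_self_of_mem hherm.eigenvectorUnitary.2
  have hSU : star U * U = 1 := Unitary.star_mul_self_of_mem hherm.eigenvectorUnitary.2
  have hdet : (B - z • 1).det = ∏ k, ((hherm.eigenvalues k : ℂ) - z) := by
    have h1 : B - z • 1 = U * (diagonal (RCLike.ofReal ∘ hherm.eigenvalues) - z • 1) * star U := by
      conv_lhs => rw [hherm.spectral_theorem, Unitary.conjStarAlgAut_apply]
      rw [Matrix.mul_sub, Matrix.sub_mul, Matrix.mul_smul, mul_one, Matrix.smul_mul, hUU]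
    rw [h1, Matrix.det_mul, Matrix.det_mul, mul_comm, ← mul_assoc, ← Matrix.det_mul, hSU]
    simp [Matrix.smul_one_eq_diagonal, Matrix.diagonal_sub, Matrix.det_diagonal]
  rw [hdet, isUnit_iff_ne_zero, Finset.prod_ne_zero_iff]
  intro k _ h
  apply hz
  have := congrArg Complex.im (sub_eq_zero.mp h)
  simpa using this.symm

lemma mul_std_mul (A B : Matrix (Fin N) (Fin N) ℂ) (a b x y : Fin N) :
    ((A * Matrix.single a b (1:ℂ) * B) : Matrix (Fin N) (Fin N) ℂ) x y
      = A x a * B b y := by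
  rw [Matrix.mul_assoc, Matrix.mul_apply, Finset.sum_eq_single a]
  · simp
  · intro j _ hj
    rw [Matrix.single_mul_apply_of_ne (h := hj), mul_zero]
  · simp

/-- for `i ≠ p`, the second derivative of the off-diagonal resolvent entry
under the symmetric perturbation of the pair `H(p,i) = H(i,p)` satisfies
`∂²G(i,p)/∂H(p,i)² = 2G(i,p)³ + 6G(i,i)G(p,p)G(i,p)`. -/
theorem resolvent_offdiag_second_deriv (N : ℕ) (H : Matrix (Fin N) (Fin N) ℝ)
    (hH : H.IsSymm) (z : ℂ) (hz : z.im ≠ 0) (i p : Fin N) (hip : i ≠ p) :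
    iteratedDeriv 2 (fun t : ℝ =>
        (((H + t • (Matrix.single p i 1 + Matrix.single i p 1)).map
            Complex.ofReal - z • (1 : Matrix (Fin N) (Fin N) ℂ))⁻¹) i p) 0
      = 2 * (((H.map Complex.ofReal - z • (1 : Matrix (Fin N) (Fin N) ℂ))⁻¹) i p) ^ 3
        + 6 * ((H.map Complex.ofReal - z • 1)⁻¹) i i
            * ((H.map Complex.ofReal - z • 1)⁻¹) p p
            * ((H.map Complex.ofReal - z • 1)⁻¹) i p := by
  classical
  set E : Matrix (Fin N) (Fin N) ℝ := Matrix.single p i 1 + Matrix.single i p 1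
    with hE
  set C : Matrix (Fin N) (Fin N) ℂ := H.map Complex.ofReal - z • 1 with hC
  set Ec : Matrix (Fin N) (Fin N) ℂ := E.map Complex.ofReal with hEc
  have hEsymm : Eᵀ = E := by
    ext a b
    simp only [Matrix.transpose_apply, hE, Matrix.add_apply, Matrix.single,
      Matrix.of_apply]
    rw [add_comm]
    congr 1 <;> simp [and_comm]
  have hAff : ∀ t : ℝ, ((H + t • E).map Complex.ofReal - z • 1 : Matrix (Fin N) (Fin N) ℂ)
      = C + t • Ec := by
    intro t; ext a b
    simp [hC, hEc, Matrix.map_apply, Matrix.add_apply, Matrix.sub_apply, Matrix.smul_apply,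
      Matrix.one_apply, Complex.real_smul]
    ring
  have hunit : ∀ t : ℝ, IsUnit (C + t • Ec) := by
    intro t
    have hs : (H + t • E).IsSymm := by
      rw [Matrix.IsSymm, Matrix.transpose_add, Matrix.transpose_smul, hH, hEsymm]
    have := isUnit_resolvent (H + t • E) hs z hz
    rwa [hAff t] at this
  set F : ℝ → Matrix (Fin N) (Fin N) ℂ := fun s => Ring.inverse (C + s • Ec) with hF
  have hFder : ∀ t : ℝ, HasDerivAt F (-(F t * Ec * F t)) t := by
    intro t
    have hMder : HasDerivAt (fun s : ℝ => C + s • Ec) Ec t := by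
      have := ((hasDerivAt_id t).smul_const Ec).const_add C
      simp only [id, one_smul] at this
      exact this
    have ha : (↑(hunit t).unit⁻¹ : Matrix (Fin N) (Fin N) ℂ) = F t := by
      rw [hF, ← Ring.inverse_unit, (hunit t).unit_spec]
    have h1 : HasFDerivAt Ring.inverse
        (-(ContinuousLinearMap.mulLeftRight ℝ (Matrix (Fin N) (Fin N) ℂ)
          ↑(hunit t).unit⁻¹ ↑(hunit t).unit⁻¹)) (C + t • Ec) := by
      have := hasFDerivAt_ringInverse (𝕜 := ℝ) (hunit t).unit
      rwa [(hunit t).unit_spec] at this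
    have h2 := h1.comp_hasDerivAt t hMder
    simp only [ContinuousLinearMap.neg_apply, ContinuousLinearMap.mulLeftRight_apply, ha] at h2
    exact h2
  set e : (Matrix (Fin N) (Fin N) ℂ) →L[ℝ] ℂ :=
    ⟨⟨⟨fun A => A i p, fun _ _ => rfl⟩, fun _ _ => rfl⟩,
      (continuous_apply p).comp (continuous_apply i)⟩ with he
  have hfg : (fun t : ℝ =>
      (((H + t • (Matrix.single p i 1 + Matrix.single i p 1)).map
          Complex.ofReal - z • (1 : Matrix (Fin N) (Fin N) ℂ))⁻¹) i p)
      = fun t => e (F t) := by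
    funext t
    show (((H + t • E).map Complex.ofReal - z • 1)⁻¹) i p = _
    rw [hAff t, Matrix.nonsing_inv_eq_ringInverse]
    rfl
  have hder1 : ∀ t : ℝ, HasDerivAt (fun s => e (F s)) (e (-(F t * Ec * F t))) t := by
    intro t
    exact e.hasFDerivAt.comp_hasDerivAt t (hFder t)
  set G : Matrix (Fin N) (Fin N) ℂ := F 0 with hG
  have hprod : HasDerivAt (fun t => -(F t * Ec * F t))
      (-(-(G * Ec * G) * Ec * G + F 0 * Ec * -(G * Ec * G))) 0 := by
    exact (((hFder 0).mul_const Ec).mul (hFder 0)).neg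
  have hder2 : HasDerivAt (fun t => e (-(F t * Ec * F t)))
      (e (-(-(G * Ec * G) * Ec * G + F 0 * Ec * -(G * Ec * G)))) 0 :=
    e.hasFDerivAt.comp_hasDerivAt 0 hprod
  rw [hfg]
  rw [iteratedDeriv_succ, iteratedDeriv_succ, iteratedDeriv_zero]
  have hd1 : deriv (fun t => e (F t)) = fun t => e (-(F t * Ec * F t)) :=
    funext fun t => (hder1 t).deriv
  rw [hd1, hder2.deriv]
  -- now pure algebra
  have hGC : G = C⁻¹ := by
    rw [hG, hF, Matrix.nonsing_inv_eq_ringInverse]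
    norm_num
  have hGsymm : C⁻¹ p i = C⁻¹ i p := by
    have hCt : Cᵀ = C := by
      ext a b
      simp only [Matrix.transpose_apply, hC, Matrix.sub_apply, Matrix.smul_apply,
        Matrix.map_apply, Matrix.one_apply, hH.apply]
      by_cases hab : a = b
      · simp [hab]
      · simp [hab, Ne.symm hab]
    conv_lhs => rw [← hCt, ← Matrix.transpose_nonsing_inv]
    rfl
  have hEc2 : Ec = Matrix.single p i (1:ℂ) + Matrix.single i p 1 := by
    ext a b
    simp [hEc, hE, Matrix.map_apply, Matrix.add_apply, Matrix.single, Matrix.of_apply,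
      apply_ite Complex.ofReal]
  have hent : ∀ (X Y : Matrix (Fin N) (Fin N) ℂ) (x y : Fin N),
      (X * Ec * Y) x y = X x p * Y i y + X x i * Y p y := by
    intro X Y x y
    rw [hEc2, Matrix.mul_add, Matrix.add_mul, Matrix.add_apply, mul_std_mul, mul_std_mul]
  show e (-(-(G * Ec * G) * Ec * G + G * Ec * -(G * Ec * G))) = _
  have happ : ∀ X : Matrix (Fin N) (Fin N) ℂ, e X = X i p := fun _ => rfl
  rw [happ]
  rw [hGC] at *
  simp only [Matrix.neg_apply, Matrix.add_apply, Matrix.neg_mul, Matrix.mul_neg]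
  have hassoc : (C⁻¹ * Ec * (C⁻¹ * Ec * C⁻¹) : Matrix (Fin N) (Fin N) ℂ)
      = C⁻¹ * Ec * C⁻¹ * Ec * C⁻¹ := by
    simp only [Matrix.mul_assoc]
  rw [hassoc]
  rw [hent (C⁻¹ * Ec * C⁻¹) C⁻¹ i p, hent C⁻¹ C⁻¹ i p, hent C⁻¹ C⁻¹ i i, hGsymm]
  ring
end

section
/- Cumulant expansion with q = 1: let X be a real random variable with E X = 0 and E|X|³ < ∞, and let f : ℝ → ℂ be C² with bounded second derivative. Then E[X f(X)] = E(X²)·E[f'(X)] + ε, where |ε| ≤ C · sup_t |f''(t)| · E|X|³ for an absolute constant C. -/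
open MeasureTheory

private lemma cheb {Ω : Type} [MeasurableSpace Ω] (μ : Measure Ω) [IsProbabilityMeasure μ]
    (u : Ω → ℝ) (h1 : Integrable u μ) (h2 : Integrable (fun ω => u ω ^ 2) μ)
    (h3 : Integrable (fun ω => u ω ^ 3) μ) (h0 : ∀ ω, 0 ≤ u ω) :
    (∫ ω, u ω ^ 2 ∂μ) * (∫ ω, u ω ∂μ) ≤ ∫ ω, u ω ^ 3 ∂μ := by
  have key : 0 ≤ ∫ p : Ω × Ω, (u p.1 - u p.2) * (u p.1 ^ 2 - u p.2 ^ 2) ∂(μ.prod μ) :=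
    integral_nonneg fun p => by
      show (0:ℝ) ≤ _; nlinarith [sq_nonneg (u p.1 - u p.2), h0 p.1, h0 p.2]
  have one_int : Integrable (fun _ : Ω => (1:ℝ)) μ := integrable_const 1
  have e1 : ∀ (f g : Ω → ℝ), ∫ p : Ω × Ω, f p.1 * g p.2 ∂(μ.prod μ)
      = (∫ ω, f ω ∂μ) * (∫ ω, g ω ∂μ) := fun f g => integral_prod_mul f g
  have i31 : Integrable (fun p : Ω × Ω => u p.1 ^ 3 * 1) (μ.prod μ) := h3.mul_prod one_int
  have i13 : Integrable (fun p : Ω × Ω => (1:ℝ) * u p.2 ^ 3) (μ.prod μ) := one_int.mul_prod h3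
  have i12 : Integrable (fun p : Ω × Ω => u p.1 * u p.2 ^ 2) (μ.prod μ) := h1.mul_prod h2
  have i21 : Integrable (fun p : Ω × Ω => u p.1 ^ 2 * u p.2) (μ.prod μ) := h2.mul_prod h1
  have expand : (fun p : Ω × Ω => (u p.1 - u p.2) * (u p.1 ^ 2 - u p.2 ^ 2))
      = fun p : Ω × Ω => (u p.1 ^ 3 * 1 + 1 * u p.2 ^ 3) - (u p.1 * u p.2 ^ 2 + u p.1 ^ 2 * u p.2) := by
    funext p; ring
  have iL : Integrable (fun p : Ω × Ω => u p.1 ^ 3 * 1 + 1 * u p.2 ^ 3) (μ.prod μ) := i31.add i13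
  have iR : Integrable (fun p : Ω × Ω => u p.1 * u p.2 ^ 2 + u p.1 ^ 2 * u p.2) (μ.prod μ) := i12.add i21
  rw [expand, integral_sub iL iR] at key
  rw [integral_add i31 i13, integral_add i12 i21, e1 (fun ω => u ω ^ 3) (fun _ => 1),
    e1 (fun _ => 1) (fun ω => u ω ^ 3), e1 u (fun ω => u ω ^ 2), e1 (fun ω => u ω ^ 2) u] at key
  simp only [integral_const, measure_univ, ENNReal.toReal_one, probReal_univ, smul_eq_mul, mul_one, one_mul] at key
  nlinarith [key]


/-- cumulant expansion with `q = 1`: there is an absolute constant `C > 0`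
such that for any real random variable `X` with `E X = 0` and `E|X|³ < ∞` and any `C²`
function `f : ℝ → ℂ` with second derivative bounded by `M`,
`|E[X f(X)] − E(X²)·E[f'(X)]| ≤ C · M · E|X|³`. -/
theorem cumulant_expansion_q_one :
    ∃ C : ℝ, 0 < C ∧
      ∀ (Ω : Type) (_ : MeasurableSpace Ω) (μ : Measure Ω), IsProbabilityMeasure μ →
        ∀ (X : Ω → ℝ), Measurable X →
          Integrable (fun ω => |X ω| ^ 3) μ →
          (∫ ω, X ω ∂μ) = 0 →
          ∀ (f : ℝ → ℂ), ContDiff ℝ 2 f →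
            ∀ (M : ℝ), (∀ t : ℝ, ‖deriv (deriv f) t‖ ≤ M) →
              ‖(∫ ω, X ω • f (X ω) ∂μ)
                  - (∫ ω, X ω ^ 2 ∂μ) • (∫ ω, deriv f (X ω) ∂μ)‖
                ≤ C * M * ∫ ω, |X ω| ^ 3 ∂μ := by
  refine ⟨2, by norm_num, ?_⟩
  intro Ω _ μ hμ X hX h3 hmean f hf M hM
  have hM0 : 0 ≤ M := le_trans (norm_nonneg _) (hM 0)
  rw [(by norm_num : (2 : WithTop ℕ∞) = 1 + 1)] at hf
  obtain ⟨hdf, -, hdf1⟩ := contDiff_succ_iff_deriv.mp hf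
  obtain ⟨hdf', hcont''⟩ := contDiff_one_iff_deriv.mp hdf1
  set b := deriv f 0 with hb
  -- Lipschitz bound for the first derivative
  have hLip : ∀ x : ℝ, ‖deriv f x - b‖ ≤ M * |x| := by
    intro x
    have := Convex.norm_image_sub_le_of_norm_deriv_le (s := (Set.univ : Set ℝ)) (f := deriv f)
      (fun y _ => hdf' y) (fun y _ => hM y) convex_univ (Set.mem_univ 0) (Set.mem_univ x)
    simpa [Real.norm_eq_abs] using this
  -- derivative of the remainder
  have hg' : ∀ t : ℝ, HasDerivAt (fun s : ℝ => f s - f 0 - s • b) (deriv f t - b) t := by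
    intro t
    have h1 : HasDerivAt f (deriv f t) t := (hdf t).hasDerivAt
    have h2 : HasDerivAt (fun s : ℝ => s • b) b t := by
      simpa using (hasDerivAt_id t).smul_const b
    exact (h1.sub_const (f 0)).sub h2
  -- Taylor bound
  have hTay : ∀ x : ℝ, ‖f x - f 0 - x • b‖ ≤ M * x ^ 2 := by
    intro x
    have habs : ∀ t ∈ segment ℝ (0:ℝ) x, |t| ≤ |x| := by
      intro t ht
      rw [segment_eq_uIcc, Set.mem_uIcc] at ht
      rcases ht with ⟨h1, h2⟩ | ⟨h1, h2⟩ <;> [skip; skip] <;>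
        cases abs_cases x <;> cases abs_cases t <;> linarith
    have key := Convex.norm_image_sub_le_of_norm_deriv_le (s := segment ℝ (0:ℝ) x)
        (f := fun s : ℝ => f s - f 0 - s • b) (C := M * |x|)
        (fun y _ => (hg' y).differentiableAt)
        (fun y hy => by
          rw [(hg' y).deriv]
          calc ‖deriv f y - b‖ ≤ M * |y| := hLip y
            _ ≤ M * |x| := by have := habs y hy; nlinarith)
        (convex_segment _ _) (left_mem_segment ℝ 0 x) (right_mem_segment ℝ 0 x)
    simpa [Real.norm_eq_abs, sq_abs, mul_assoc, pow_two] using key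
  -- integrability facts
  have hint1 : Integrable (fun ω => |X ω|) μ := by
    refine ((integrable_const (1:ℝ)).add h3).mono' hX.abs.aestronglyMeasurable
      (Filter.Eventually.of_forall fun ω => ?_)
    simp only [Pi.add_apply, Real.norm_eq_abs, abs_abs]
    nlinarith [mul_nonneg (abs_nonneg (X ω)) (sq_nonneg (|X ω| - 1)),
      sq_nonneg (2 * |X ω| - 1), abs_nonneg (X ω)]
  have hint2 : Integrable (fun ω => X ω ^ 2) μ := by
    refine ((integrable_const (1:ℝ)).add h3).mono' ((hX.pow_const 2).aestronglyMeasurable)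
      (Filter.Eventually.of_forall fun ω => ?_)
    simp only [Pi.add_apply, Real.norm_eq_abs, abs_pow, abs_abs]
    nlinarith [mul_nonneg (abs_nonneg (X ω)) (sq_nonneg (|X ω| - 1)),
      sq_nonneg (2 * |X ω| - 1), abs_nonneg (X ω)]
  have hX_int : Integrable X μ :=
    (integrable_norm_iff hX.aestronglyMeasurable).mp (by simpa [Real.norm_eq_abs] using hint1)
  have hmeas_fX : AEStronglyMeasurable (fun ω => f (X ω)) μ :=
    (hf.continuous.measurable.comp hX).aestronglyMeasurable
  have hmeas_f'X : AEStronglyMeasurable (fun ω => deriv f (X ω)) μ :=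
    (hdf1.continuous.measurable.comp hX).aestronglyMeasurable
  have hXg_int : Integrable (fun ω => X ω • (f (X ω) - f 0 - X ω • b)) μ := by
    refine (h3.const_mul M).mono'
      ((hX.aestronglyMeasurable.smul ((hmeas_fX.sub aestronglyMeasurable_const).sub
        (hX.aestronglyMeasurable.smul aestronglyMeasurable_const)))) 
      (Filter.Eventually.of_forall fun ω => ?_)
    rw [norm_smul, Real.norm_eq_abs]
    calc |X ω| * ‖f (X ω) - f 0 - X ω • b‖ ≤ |X ω| * (M * X ω ^ 2) := by
          have := hTay (X ω); nlinarith [abs_nonneg (X ω)]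
      _ = M * |X ω| ^ 3 := by rw [show |X ω| ^ 3 = |X ω| * X ω ^ 2 by rw [← sq_abs]; ring]; ring
  have hXgnorm_bound : ‖∫ ω, X ω • (f (X ω) - f 0 - X ω • b) ∂μ‖ ≤ M * ∫ ω, |X ω| ^ 3 ∂μ := by
    calc ‖∫ ω, X ω • (f (X ω) - f 0 - X ω • b) ∂μ‖
        ≤ ∫ ω, ‖X ω • (f (X ω) - f 0 - X ω • b)‖ ∂μ := norm_integral_le_integral_norm _
      _ ≤ ∫ ω, M * |X ω| ^ 3 ∂μ := by
          refine integral_mono hXg_int.norm (h3.const_mul M) fun ω => ?_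
          rw [norm_smul, Real.norm_eq_abs]
          calc |X ω| * ‖f (X ω) - f 0 - X ω • b‖ ≤ |X ω| * (M * X ω ^ 2) := by
                have := hTay (X ω); nlinarith [abs_nonneg (X ω)]
            _ = M * |X ω| ^ 3 := by
                rw [show |X ω| ^ 3 = |X ω| * X ω ^ 2 by rw [← sq_abs]; ring]; ring
      _ = M * ∫ ω, |X ω| ^ 3 ∂μ := integral_const_mul M _
  have hf'X_int : Integrable (fun ω => deriv f (X ω)) μ := by
    refine ((integrable_const ‖b‖).add (hint1.const_mul M)).mono' hmeas_f'X
      (Filter.Eventually.of_forall fun ω => ?_)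
    calc ‖deriv f (X ω)‖ = ‖b + (deriv f (X ω) - b)‖ := by ring_nf
      _ ≤ ‖b‖ + ‖deriv f (X ω) - b‖ := norm_add_le _ _
      _ ≤ ‖b‖ + M * |X ω| := by have := hLip (X ω); linarith
  have hrX_int : Integrable (fun ω => deriv f (X ω) - b) μ := hf'X_int.sub (integrable_const b)
  -- decomposition of E[X f(X)]
  have hdecomp : (∫ ω, X ω • f (X ω) ∂μ)
      = (∫ ω, X ω ∂μ) • f 0 + (∫ ω, X ω ^ 2 ∂μ) • b
        + ∫ ω, X ω • (f (X ω) - f 0 - X ω • b) ∂μ := by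
    have eqfun : (fun ω => X ω • f (X ω))
        = fun ω => (X ω • f 0 + (X ω ^ 2) • b) + X ω • (f (X ω) - f 0 - X ω • b) := by
      funext ω
      simp only [Complex.real_smul]
      push_cast
      ring
    have iA : Integrable (fun ω => X ω • f 0 + X ω ^ 2 • b) μ :=
      (hX_int.smul_const (f 0)).add (hint2.smul_const b)
    rw [eqfun, integral_add iA hXg_int,
      integral_add (hX_int.smul_const (f 0)) (hint2.smul_const b),
      integral_smul_const, integral_smul_const]
  have hdecomp2 : (∫ ω, deriv f (X ω) ∂μ) = b + ∫ ω, (deriv f (X ω) - b) ∂μ := by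
    have eqfun : (fun ω => deriv f (X ω)) = fun ω => b + (deriv f (X ω) - b) := by
      funext ω; ring
    rw [eqfun, integral_add (integrable_const b) hrX_int]
    simp [measure_univ]
  set S2 := ∫ ω, X ω ^ 2 ∂μ with hS2
  set I3 := ∫ ω, |X ω| ^ 3 ∂μ with hI3
  set EG := ∫ ω, X ω • (f (X ω) - f 0 - X ω • b) ∂μ with hEG
  set ER := ∫ ω, (deriv f (X ω) - b) ∂μ with hER
  have hS2nn : 0 ≤ S2 := integral_nonneg fun ω => sq_nonneg _
  have hERbound : ‖ER‖ ≤ M * ∫ ω, |X ω| ∂μ := by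
    calc ‖ER‖ ≤ ∫ ω, ‖deriv f (X ω) - b‖ ∂μ := norm_integral_le_integral_norm _
      _ ≤ ∫ ω, M * |X ω| ∂μ :=
          integral_mono hrX_int.norm (hint1.const_mul M) fun ω => hLip (X ω)
      _ = M * ∫ ω, |X ω| ∂μ := integral_const_mul M _
  have hcheb : S2 * (∫ ω, |X ω| ∂μ) ≤ I3 := by
    have h2' : Integrable (fun ω => |X ω| ^ 2) μ := by simpa [sq_abs] using hint2
    have := cheb μ (fun ω => |X ω|) hint1 h2' h3 (fun ω => abs_nonneg _)
    simpa [sq_abs] using this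
  have habsnn : 0 ≤ ∫ ω, |X ω| ∂μ := integral_nonneg fun ω => abs_nonneg _
  have hI3nn : 0 ≤ I3 := integral_nonneg fun ω => pow_nonneg (abs_nonneg _) 3
  rw [hdecomp, hdecomp2, hmean]
  have : (0:ℝ) • f 0 + S2 • b + EG - S2 • (b + ER) = EG - S2 • ER := by
    rw [smul_add]; simp
  rw [this]
  calc ‖EG - S2 • ER‖ ≤ ‖EG‖ + ‖S2 • ER‖ := norm_sub_le _ _
    _ ≤ M * I3 + S2 * ‖ER‖ := by
        rw [norm_smul, Real.norm_eq_abs, abs_of_nonneg hS2nn]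
        exact add_le_add hXgnorm_bound le_rfl
    _ ≤ M * I3 + S2 * (M * ∫ ω, |X ω| ∂μ) := by
        have := hERbound; nlinarith
    _ = M * I3 + M * (S2 * ∫ ω, |X ω| ∂μ) := by ring
    _ ≤ M * I3 + M * I3 := by nlinarith
    _ = 2 * M * I3 := by ring
end

section
/- Unique solvability of the self-consistent system: let z with |Im z| ≥ η where η = 2v+1, ξ = −1/z, and let u(i,p) ≥ 0 satisfy Σ_p u(i,p) ≤ 1 + c/b for all i (with v²(1+c/b)/η² < 1/2). Then the system r(i) = ξ + ξ v² r(i) Σ_p r(p) u(i,p), |i| ≤ n, has a unique solution in the set of vectors with sup_i |r(i)| ≤ 2/|Im z|. -/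
set_option maxHeartbeats 1000000

private lemma selfconsistent_aux_contra (m v t κ : ℝ) (h4 : (m + v ^ 2 * (t * κ)) * m < 0)
    (h7 : v ^ 2 * κ * (-t * m) ≤ v ^ 2 * κ * 2) (hs : v ^ 2 * κ ≤ 1 / 2 * (2 * v + 1) ^ 2)
    (hm2 : (2 * v + 1) ^ 2 ≤ m * m) : False := by
  nlinarith [h4, h7, hs, hm2]

/-- unique solvability of the self-consistent system: for `|Im z| ≥ 2v+1`,
`ξ = −1/z`, and nonnegative weights `u(i,p)` with row sums bounded by `1 + c/b` such that
`v²(1+c/b)/η² < 1/2`, the system `r(i) = ξ + ξ v² r(i) Σ_p r(p) u(i,p)` has a unique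
solution with `sup_i |r(i)| ≤ 2/|Im z|`. -/
theorem selfconsistent_unique_solution (v : ℝ) (hv : 0 < v) (z : ℂ)
    (hz : 2 * v + 1 ≤ |z.im|) (N : ℕ) (u : Fin N → Fin N → ℝ)
    (hu : ∀ i p, 0 ≤ u i p) (c b : ℝ) (hb : 0 < b)
    (hrow : ∀ i, (∑ p, u i p) ≤ 1 + c / b)
    (hsmall : v ^ 2 * (1 + c / b) / (2 * v + 1) ^ 2 < 1 / 2) :
    ∃! r : Fin N → ℂ,
      (∀ i, ‖r i‖ ≤ 2 / |z.im|) ∧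
      ∀ i, r i = -1 / z + (-1 / z) * (v : ℂ) ^ 2 * r i * ∑ p, r p * (u i p : ℂ) := by
  rcases isEmpty_or_nonempty (Fin N) with hN | hN
  · exact ⟨fun _ => 0, ⟨fun i => (IsEmpty.false i).elim, fun i => (IsEmpty.false i).elim⟩,
      fun y _ => funext fun i => (IsEmpty.false i).elim⟩
  -- basic constants
  set m : ℝ := |z.im| with hmdef
  have hη : (0:ℝ) < 2 * v + 1 := by linarith
  have hm : (0:ℝ) < m := lt_of_lt_of_le hη hz
  have him : z.im ≠ 0 := abs_pos.mp hm
  have hz0 : z ≠ 0 := fun h => him (by simp [h])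
  set κ : ℝ := 1 + c / b with hκdef
  have hκ : 0 ≤ κ := le_trans (Finset.sum_nonneg fun p _ => hu (Classical.arbitrary _) p)
    (hrow (Classical.arbitrary _))
  set σ : ℝ := if 0 ≤ z.im then 1 else -1 with hσdef
  have hσz : σ * z.im = m := by
    rcases le_or_gt 0 z.im with h | h
    · simp [hσdef, if_pos h, hmdef, abs_of_nonneg h]
    · simp [hσdef, if_neg (not_le.mpr h), hmdef, abs_of_neg h]
  have hσabs : |σ| = 1 := by
    rw [hσdef]
    rcases le_or_gt 0 z.im with h | h
    · rw [if_pos h]; norm_num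
    · rw [if_neg (not_le.mpr h)]; norm_num
  have hV : (v : ℂ) ^ 2 = ((v ^ 2 : ℝ) : ℂ) := by push_cast; ring
  have hVre : ((v : ℂ) ^ 2).re = v ^ 2 := by rw [hV, Complex.ofReal_re]
  have hVim : ((v : ℂ) ^ 2).im = 0 := by rw [hV, Complex.ofReal_im]
  -- the sum and the map
  set S : (Fin N → ℂ) → Fin N → ℂ := fun r i => ∑ p, r p * (u i p : ℂ) with hSdef
  set T : (Fin N → ℂ) → Fin N → ℂ := fun r i => -1 / (z + (v : ℂ) ^ 2 * S r i) with hTdef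
  set K : Set (Fin N → ℂ) := {r | ∀ i, 0 ≤ σ * (r i).im} with hKdef
  have hSim : ∀ r i, (S r i).im = ∑ p, (r p).im * u i p := by
    intro r i
    simp only [hSdef]
    rw [Complex.im_sum]
    exact Finset.sum_congr rfl fun p _ => by simp [Complex.mul_im]
  have hwim : ∀ (r : Fin N → ℂ) i,
      (z + (v : ℂ) ^ 2 * S r i).im = z.im + v ^ 2 * (S r i).im := by
    intro r i
    rw [Complex.add_im, Complex.mul_im, hVre, hVim]
    ring
  have hσwim : ∀ r ∈ K, ∀ i, m ≤ σ * (z + (v : ℂ) ^ 2 * S r i).im := by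
    intro r hr i
    have hsum : σ * ∑ p, (r p).im * u i p = ∑ p, σ * ((r p).im * u i p) := by
      rw [Finset.mul_sum]
    have h1 : σ * (z + (v : ℂ) ^ 2 * S r i).im
        = σ * z.im + v ^ 2 * ∑ p, σ * ((r p).im * u i p) := by
      rw [hwim r i, hSim r i, mul_add, mul_left_comm σ (v ^ 2), hsum]
    have h2 : (0:ℝ) ≤ ∑ p, σ * ((r p).im * u i p) :=
      Finset.sum_nonneg fun p _ => by
        rw [← mul_assoc]; exact mul_nonneg (hr p) (hu i p)
    have h3 : (0:ℝ) ≤ v ^ 2 * ∑ p, σ * ((r p).im * u i p) :=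
      mul_nonneg (sq_nonneg v) h2
    rw [h1, hσz]; linarith
  have hwnorm : ∀ r ∈ K, ∀ i, m ≤ ‖z + (v : ℂ) ^ 2 * S r i‖ := by
    intro r hr i
    have h1 := hσwim r hr i
    have h2 : σ * (z + (v : ℂ) ^ 2 * S r i).im ≤ |(z + (v : ℂ) ^ 2 * S r i).im| := by
      calc σ * (z + (v : ℂ) ^ 2 * S r i).im
          ≤ |σ * (z + (v : ℂ) ^ 2 * S r i).im| := le_abs_self _
        _ = |(z + (v : ℂ) ^ 2 * S r i).im| := by rw [abs_mul, hσabs, one_mul]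
    have h3 : |(z + (v : ℂ) ^ 2 * S r i).im| ≤ ‖z + (v : ℂ) ^ 2 * S r i‖ := by
      exact Complex.abs_im_le_norm _
    linarith
  have hwne : ∀ r ∈ K, ∀ i, z + (v : ℂ) ^ 2 * S r i ≠ 0 := by
    intro r hr i h
    have h2 := hwnorm r hr i
    rw [h] at h2; simp at h2; linarith
  have hdivim : ∀ w : ℂ, (-1 / w).im = w.im / Complex.normSq w := by
    intro w
    rw [Complex.div_im]
    simp only [Complex.neg_im, Complex.one_im, Complex.neg_re, Complex.one_re, neg_zero,
      zero_mul, zero_div, zero_sub, neg_mul, neg_neg, neg_div]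
    ring
  -- T maps K to K and into the ball of radius 1/m
  have hTmem : ∀ r ∈ K, ∀ i, 0 ≤ σ * (T r i).im ∧ ‖T r i‖ ≤ 1 / m := by
    intro r hr i
    have hw := hwnorm r hr i
    have hσw := hσwim r hr i
    constructor
    · have him' : (T r i).im
          = (z + (v : ℂ) ^ 2 * S r i).im / Complex.normSq (z + (v : ℂ) ^ 2 * S r i) := by
        simp only [hTdef]
        exact hdivim _
      rw [him', mul_div_assoc']
      exact div_nonneg (by linarith) (Complex.normSq_nonneg _)
    · have hTn : ‖T r i‖ = 1 / ‖z + (v : ℂ) ^ 2 * S r i‖ := by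
        simp only [hTdef]
        rw [norm_div, norm_neg, norm_one]
      rw [hTn]
      exact one_div_le_one_div_of_le hm hw
  -- contraction estimate
  have hsmall' : v ^ 2 * κ ≤ 1 / 2 * (2 * v + 1) ^ 2 := by
    rw [div_lt_iff₀ (by positivity)] at hsmall
    linarith
  have hTdist : ∀ r ∈ K, ∀ s ∈ K, dist (T r) (T s) ≤ (1/2 : ℝ) * dist r s := by
    intro r hr s hs
    rw [dist_pi_le_iff (by positivity)]
    intro i
    rw [dist_eq_norm]
    have hΔS : S r i - S s i = ∑ p, (r p - s p) * (u i p : ℂ) := by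
      simp only [hSdef]
      rw [← Finset.sum_sub_distrib]
      exact Finset.sum_congr rfl fun p _ => by ring
    have hΔSnorm : ‖S r i - S s i‖ ≤ κ * dist r s := by
      rw [hΔS]
      calc ‖∑ p, (r p - s p) * (u i p : ℂ)‖ ≤ ∑ p, ‖(r p - s p) * (u i p : ℂ)‖ :=
            norm_sum_le _ _
        _ ≤ ∑ p, dist r s * u i p := by
            refine Finset.sum_le_sum fun p _ => ?_
            rw [norm_mul]
            have h1 : ‖((u i p : ℝ) : ℂ)‖ = u i p := by
              rw [Complex.norm_real, Real.norm_eq_abs, abs_of_nonneg (hu i p)]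
            rw [h1]
            have h2 : ‖r p - s p‖ ≤ dist r s := by
              rw [← dist_eq_norm]; exact dist_le_pi_dist r s p
            exact mul_le_mul_of_nonneg_right h2 (hu i p)
        _ = dist r s * ∑ p, u i p := by rw [Finset.mul_sum]
        _ ≤ κ * dist r s := by
            rw [mul_comm]
            exact mul_le_mul_of_nonneg_right (hrow i) dist_nonneg
    have hfactor : T r i - T s i
        = (v : ℂ) ^ 2 * (S r i - S s i) /
          ((z + (v : ℂ) ^ 2 * S r i) * (z + (v : ℂ) ^ 2 * S s i)) := by
      simp only [hTdef]
      field_simp [hwne r hr i, hwne s hs i]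
      ring
    rw [hfactor, norm_div, norm_mul, norm_mul]
    have hVnorm : ‖(v : ℂ) ^ 2‖ = v ^ 2 := by
      rw [hV, Complex.norm_real, Real.norm_eq_abs, abs_of_nonneg (sq_nonneg v)]
    rw [hVnorm]
    have hnum : v ^ 2 * ‖S r i - S s i‖ ≤ v ^ 2 * (κ * dist r s) :=
      mul_le_mul_of_nonneg_left hΔSnorm (sq_nonneg v)
    have hden : m * m ≤ ‖z + (v : ℂ) ^ 2 * S r i‖ * ‖z + (v : ℂ) ^ 2 * S s i‖ :=
      mul_le_mul (hwnorm r hr i) (hwnorm s hs i) hm.le (norm_nonneg _)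
    calc v ^ 2 * ‖S r i - S s i‖ / (‖z + (v : ℂ) ^ 2 * S r i‖ * ‖z + (v : ℂ) ^ 2 * S s i‖)
        ≤ v ^ 2 * (κ * dist r s) / (m * m) := by
          apply div_le_div₀ (by positivity) hnum (by positivity) hden
      _ ≤ 1 / 2 * dist r s := by
          rw [div_le_iff₀ (by positivity)]
          have hd : (0:ℝ) ≤ dist r s := dist_nonneg
          have hm2 : (2 * v + 1) ^ 2 ≤ m * m := by nlinarith
          nlinarith [mul_le_mul_of_nonneg_right hsmall' hd,
            mul_le_mul_of_nonneg_left hm2 (mul_nonneg (by norm_num : (0:ℝ) ≤ 1/2) hd)]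
  -- the subtype and the contraction
  have hKclosed : IsClosed K := by
    have hK2 : K = ⋂ i, {r : Fin N → ℂ | 0 ≤ σ * (r i).im} := by
      ext r; simp [hKdef, Set.mem_iInter]
    rw [hK2]
    exact isClosed_iInter fun i => isClosed_le continuous_const
      (continuous_const.mul (Complex.continuous_im.comp (continuous_apply i)))
  haveI : Nonempty K := ⟨⟨fun _ => 0, fun i => by simp [hKdef]⟩⟩
  haveI : CompleteSpace K := hKclosed.completeSpace_coe
  set f : K → K := fun r => ⟨T r.1, fun i => (hTmem r.1 r.2 i).1⟩ with hfdef
  have hcontr : ContractingWith (1/2 : NNReal) f := by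
    constructor
    · rw [← NNReal.coe_lt_coe]; norm_num
    · apply LipschitzWith.of_dist_le_mul
      intro x y
      rw [Subtype.dist_eq, Subtype.dist_eq]
      have h1 := hTdist x.1 x.2 y.1 y.2
      have hc : ((1/2 : NNReal) : ℝ) = 1/2 := by norm_num
      rw [hc]
      exact h1
  -- fixed-point equation implies the stated equation
  have forward : ∀ r ∈ K, T r = r →
      (∀ i, ‖r i‖ ≤ 2 / m) ∧
      ∀ i, r i = -1 / z + (-1 / z) * (v : ℂ) ^ 2 * r i * ∑ p, r p * (u i p : ℂ) := by
    intro r hr hfix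
    have hfix' : ∀ i, r i = -1 / (z + (v : ℂ) ^ 2 * S r i) := by
      intro i
      have h1 := congrFun hfix i
      simp only [hTdef] at h1
      exact h1.symm
    constructor
    · intro i
      have h1 : ‖T r i‖ ≤ 1 / m := (hTmem r hr i).2
      rw [hfix] at h1
      calc ‖r i‖ ≤ 1 / m := h1
        _ ≤ 2 / m := by
            rw [div_le_div_iff₀ hm hm]; nlinarith
    · intro i
      have hne := hwne r hr i
      show r i = -1 / z + (-1 / z) * (v : ℂ) ^ 2 * r i * S r i
      rw [hfix' i]
      field_simp
      ring
  -- any solution in the ball lies in K and is a fixed point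
  have backward : ∀ y : Fin N → ℂ,
      (∀ i, ‖y i‖ ≤ 2 / m) →
      (∀ i, y i = -1 / z + (-1 / z) * (v : ℂ) ^ 2 * y i * ∑ p, y p * (u i p : ℂ)) →
      y ∈ K ∧ T y = y := by
    intro y hball heq
    have hprod : ∀ i, y i * (z + (v : ℂ) ^ 2 * S y i) = -1 := by
      intro i
      have h := heq i
      have h' : z * y i
          = z * (-1 / z + (-1 / z) * (v : ℂ) ^ 2 * y i * ∑ p, y p * (u i p : ℂ)) := by
        rw [← h]
      have h'' : z * y i
          = -1 + -1 * (v : ℂ) ^ 2 * y i * ∑ p, y p * (u i p : ℂ) := by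
        rw [h']
        field_simp
      show y i * (z + (v : ℂ) ^ 2 * ∑ p, y p * (u i p : ℂ)) = -1
      linear_combination h''
    have hyne : ∀ i, z + (v : ℂ) ^ 2 * S y i ≠ 0 := by
      intro i h
      have h2 := hprod i
      rw [h, mul_zero] at h2
      simp at h2
    have hyfix : ∀ i, y i = T y i := by
      intro i
      simp only [hTdef]
      rw [eq_div_iff (hyne i)]
      exact hprod i
    -- the minimum argument: y lies in the cone K
    have hmem : y ∈ K := by
      intro i
      by_contra hneg
      push_neg at hneg
      obtain ⟨i₀, -, hmin0⟩ := Finset.exists_min_image Finset.univ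
        (fun j => σ * (y j).im) ⟨i, Finset.mem_univ i⟩
      have hmin : ∀ j, σ * (y i₀).im ≤ σ * (y j).im :=
        fun j => hmin0 j (Finset.mem_univ j)
      set t : ℝ := σ * (y i₀).im with htdef
      have ht : t < 0 := lt_of_le_of_lt (hmin i) hneg
      have hw : y i₀ = -1 / (z + (v : ℂ) ^ 2 * S y i₀) := by
        have h1 := hyfix i₀
        simp only [hTdef] at h1
        exact h1
      have him' : (y i₀).im
          = (z + (v : ℂ) ^ 2 * S y i₀).im / Complex.normSq (z + (v : ℂ) ^ 2 * S y i₀) := by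
        rw [hw]; exact hdivim _
      have hnsq : 0 < Complex.normSq (z + (v : ℂ) ^ 2 * S y i₀) :=
        Complex.normSq_pos.mpr (hyne i₀)
      have hσwneg : σ * (z + (v : ℂ) ^ 2 * S y i₀).im < 0 := by
        by_contra hge
        push_neg at hge
        have h0t : 0 ≤ t := by
          rw [htdef, him', mul_div_assoc']
          exact div_nonneg hge hnsq.le
        linarith
      have hSlow : t * κ ≤ σ * (S y i₀).im := by
        rw [hSim, Finset.mul_sum]
        have h1 : ∀ p ∈ Finset.univ, t * u i₀ p ≤ σ * ((y p).im * u i₀ p) := by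
          intro p _
          rw [← mul_assoc]
          exact mul_le_mul_of_nonneg_right (hmin p) (hu i₀ p)
        calc t * κ ≤ t * ∑ p, u i₀ p :=
              mul_le_mul_of_nonpos_left (hrow i₀) ht.le
          _ = ∑ p, t * u i₀ p := by rw [Finset.mul_sum]
          _ ≤ ∑ p, σ * ((y p).im * u i₀ p) := Finset.sum_le_sum h1
      have hwlow : m + v ^ 2 * (t * κ) ≤ σ * (z + (v : ℂ) ^ 2 * S y i₀).im := by
        have h1 : σ * (z + (v : ℂ) ^ 2 * S y i₀).im
            = σ * z.im + v ^ 2 * (σ * (S y i₀).im) := by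
          rw [hwim]; ring
        rw [h1, hσz]
        have h2 := mul_le_mul_of_nonneg_left hSlow (sq_nonneg v)
        linarith
      have htlow : -(2 / m) ≤ t := by
        have h1 : |(y i₀).im| ≤ ‖y i₀‖ := by
          exact Complex.abs_im_le_norm _
        have h2 : ‖y i₀‖ ≤ 2 / m := hball i₀
        have h3 : |t| ≤ 2 / m := by
          rw [htdef, abs_mul, hσabs, one_mul]; linarith
        linarith [neg_abs_le t]
      have h1 : m + v ^ 2 * (t * κ) < 0 := lt_of_le_of_lt hwlow hσwneg
      have hmt : -t * m ≤ 2 := by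
        have h5 : -t ≤ 2 / m := by linarith
        calc -t * m ≤ (2 / m) * m := mul_le_mul_of_nonneg_right h5 hm.le
          _ = 2 := by field_simp
      have h4 : (m + v ^ 2 * (t * κ)) * m < 0 := by
        have h6 := mul_lt_mul_of_pos_right h1 hm
        simpa using h6
      have h7 : v ^ 2 * κ * (-t * m) ≤ v ^ 2 * κ * 2 :=
        mul_le_mul_of_nonneg_left hmt (mul_nonneg (sq_nonneg v) hκ)
      have hm2 : (2 * v + 1) ^ 2 ≤ m * m := by nlinarith [hz, hη]
      exact selfconsistent_aux_contra m v t κ h4 h7 hsmall' hm2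
    exact ⟨hmem, funext fun i => (hyfix i).symm⟩
  -- assemble
  set r₀ : Fin N → ℂ := (ContractingWith.fixedPoint f hcontr).1 with hr₀def
  have hr₀K : r₀ ∈ K := (ContractingWith.fixedPoint f hcontr).2
  have hr₀fix : T r₀ = r₀ := by
    have h1 := ContractingWith.fixedPoint_isFixedPt hcontr
    exact congrArg Subtype.val h1
  refine ⟨r₀, forward r₀ hr₀K hr₀fix, ?_⟩
  intro y hy
  obtain ⟨hyK, hyfix⟩ := backward y hy.1 hy.2
  have h2 : (⟨y, hyK⟩ : K) = ContractingWith.fixedPoint f hcontr := by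
    apply ContractingWith.fixedPoint_unique
    exact Subtype.ext hyfix
  exact congrArg Subtype.val h2
end

section
/- Stability of the fixed-point equation: let z satisfy |Im z| ≥ η = 2v+1 and set τ = v²/η² < 1/4. If w solves w = ξ + ξv²w² (ξ = −1/z, w the Stieltjes transform of the semicircle law, |w| ≤ 1/|Im z|) and a complex number g satisfies |g| ≤ 1/|Im z| and g = ξ + ξv²g² + δ, then |g − w| ≤ |δ|/(1 − 2τ). -/
/-- stability of the fixed-point equation: let `|Im z| ≥ η = 2v+1`,
`τ = v²/η²`, `ξ = −1/z`. If `w` solves `w = ξ + ξv²w²` with `|w| ≤ 1/|Im z|` and `g`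
satisfies `|g| ≤ 1/|Im z|` and `g = ξ + ξv²g² + δ`, then `|g − w| ≤ |δ|/(1 − 2τ)`. -/
theorem fixed_point_stability (v : ℝ) (hv : 0 < v) (z : ℂ) (hz : 2 * v + 1 ≤ |z.im|)
    (w g δ : ℂ) (hw : w = -1 / z + (-1 / z) * (v : ℂ) ^ 2 * w ^ 2)
    (hwb : ‖w‖ ≤ 1 / |z.im|) (hgb : ‖g‖ ≤ 1 / |z.im|)
    (hg : g = -1 / z + (-1 / z) * (v : ℂ) ^ 2 * g ^ 2 + δ) :
    ‖g - w‖ ≤ ‖δ‖ / (1 - 2 * (v ^ 2 / (2 * v + 1) ^ 2)) := by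
  set η : ℝ := 2 * v + 1 with hη
  have hη1 : 1 ≤ η := by simp [hη]; linarith
  have hη0 : 0 < η := by linarith
  have him : 0 < |z.im| := lt_of_lt_of_le hη0 hz
  have hzne : z ≠ 0 := by
    intro h; rw [h] at him; simp at him
  have hznorm : |z.im| ≤ ‖z‖ := by
    simpa using Complex.abs_im_le_norm z
  have hz0 : 0 < ‖z‖ := lt_of_lt_of_le him hznorm
  -- key identity
  have key : g - w = (-1 / z) * (v : ℂ) ^ 2 * (g + w) * (g - w) + δ := by
    linear_combination hg - hw
  have hc : ‖(-1 / z) * (v : ℂ) ^ 2 * (g + w)‖ ≤ 2 * (v ^ 2 / η ^ 2) := by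
    have h1 : ‖(-1 / z : ℂ)‖ ≤ 1 / η := by
      rw [norm_div, norm_neg, norm_one]
      exact div_le_div_of_nonneg_left one_pos.le hη0 (le_trans hz hznorm)
    have h2 : ‖(v : ℂ) ^ 2‖ = v ^ 2 := by
      rw [norm_pow, Complex.norm_real, Real.norm_eq_abs, abs_of_pos hv]
    have h3 : ‖g + w‖ ≤ 2 / η := by
      calc ‖g + w‖ ≤ ‖g‖ + ‖w‖ := norm_add_le _ _
        _ ≤ 1 / |z.im| + 1 / |z.im| := by linarith
        _ ≤ 1 / η + 1 / η := by
            have := div_le_div_of_nonneg_left one_pos.le hη0 hz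
            linarith
        _ = 2 / η := by ring
    calc ‖(-1 / z) * (v : ℂ) ^ 2 * (g + w)‖
        = ‖(-1 / z : ℂ)‖ * ‖(v : ℂ) ^ 2‖ * ‖g + w‖ := by
          rw [norm_mul, norm_mul]
      _ ≤ (1 / η) * v ^ 2 * (2 / η) := by
          apply mul_le_mul (mul_le_mul h1 (le_of_eq h2) (norm_nonneg _) (by positivity))
            h3 (norm_nonneg _) (by positivity)
      _ = 2 * (v ^ 2 / η ^ 2) := by field_simp
  have hτ : 2 * (v ^ 2 / η ^ 2) < 1 := by
    rw [hη]
    have h4 : 2 * v ^ 2 < (2 * v + 1) ^ 2 := by nlinarith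
    rw [mul_div_assoc'] at *
    exact (div_lt_one (by positivity)).mpr h4
  have hbound : ‖g - w‖ ≤ 2 * (v ^ 2 / η ^ 2) * ‖g - w‖ + ‖δ‖ := by
    calc ‖g - w‖ = ‖(-1 / z) * (v : ℂ) ^ 2 * (g + w) * (g - w) + δ‖ := by rw [← key]
      _ ≤ ‖(-1 / z) * (v : ℂ) ^ 2 * (g + w) * (g - w)‖ + ‖δ‖ := norm_add_le _ _
      _ = ‖(-1 / z) * (v : ℂ) ^ 2 * (g + w)‖ * ‖g - w‖ + ‖δ‖ := by rw [norm_mul]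
      _ ≤ 2 * (v ^ 2 / η ^ 2) * ‖g - w‖ + ‖δ‖ := by
          have := mul_le_mul_of_nonneg_right hc (norm_nonneg (g - w))
          linarith
  have hpos : 0 < 1 - 2 * (v ^ 2 / η ^ 2) := by linarith
  rw [le_div_iff₀ hpos]
  nlinarith [norm_nonneg (g - w)]
end

section
/- Convergence of Stieltjes transforms on a set with an accumulation point extends: if (μ_n) is a sequence of probability measures on ℝ with Stieltjes transforms g_n(z) = ∫dμ_n/(λ−z), and g_n(z) → w(z) for every z in the region Λ_η = {z : |Im z| ≥ η} for some η > 0, where w is the Stieltjes transform of a probability measure μ, then g_n(z) → w(z) for every z ∈ ℂ \ ℝ, and μ_n converges weakly to μ. -/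
open MeasureTheory Filter

section PartAB
open Complex Metric


noncomputable def sg (ν : Measure ℝ) (z : ℂ) : ℂ := ∫ l : ℝ, 1 / ((l : ℂ) - z) ∂ν

lemma kernel_norm_le {z : ℂ} (hz : z.im ≠ 0) (l : ℝ) :
    ‖1 / ((l : ℂ) - z)‖ ≤ |z.im|⁻¹ := by
  rw [norm_div, norm_one]
  have h1 : |z.im| ≤ ‖(l : ℂ) - z‖ := by
    have := abs_im_le_norm ((l : ℂ) - z)
    simpa [sub_im] using this
  have h2 : (0:ℝ) < |z.im| := abs_pos.mpr hz
  rw [div_le_iff₀ (lt_of_lt_of_le h2 h1)]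
  rw [inv_mul_eq_div, le_div_iff₀ h2]
  nlinarith

lemma integrable_kernel (ν : Measure ℝ) [IsProbabilityMeasure ν] {z : ℂ} (hz : z.im ≠ 0) :
    Integrable (fun l : ℝ => 1 / ((l : ℂ) - z)) ν := by
  apply Integrable.mono' (integrable_const (|z.im|⁻¹))
  · have : Continuous fun l : ℝ => 1 / ((l : ℂ) - z) := by
      apply Continuous.div continuous_const (by continuity)
      intro l h
      have := congrArg Complex.im h
      simp [sub_im] at this
      exact hz this
    exact this.aestronglyMeasurable
  · exact Filter.Eventually.of_forall fun l => kernel_norm_le hz l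

lemma sg_norm_le (ν : Measure ℝ) [IsProbabilityMeasure ν] {z : ℂ} (hz : z.im ≠ 0) :
    ‖sg ν z‖ ≤ |z.im|⁻¹ := by
  calc ‖sg ν z‖ ≤ ∫ l : ℝ, ‖1 / ((l : ℂ) - z)‖ ∂ν := norm_integral_le_integral_norm _
  _ ≤ ∫ _ : ℝ, |z.im|⁻¹ ∂ν := by
      apply integral_mono _ (integrable_const _) (fun l => kernel_norm_le hz l)
      exact (integrable_kernel ν hz).norm
  _ = |z.im|⁻¹ := by simp

lemma sg_hasDerivAt (ν : Measure ℝ) [IsProbabilityMeasure ν] {z : ℂ} (hz : 0 < z.im) :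
    HasDerivAt (sg ν) (∫ l : ℝ, (((l : ℂ) - z) ^ 2)⁻¹ ∂ν) z := by
  set ε := z.im / 2 with hε
  have hε2 : 0 < ε := by positivity
  have him : ∀ x ∈ Metric.ball z ε, ∀ l : ℝ, ε ≤ ‖(l:ℂ) - x‖ := by
    intro x hx l
    have h1 : |x.im - z.im| ≤ ‖x - z‖ := by
      simpa [sub_im] using abs_im_le_norm (x - z)
    rw [Metric.mem_ball, dist_eq_norm] at hx
    have h2 : |x.im - z.im| < ε := h1.trans_lt hx
    rw [abs_lt] at h2
    have hxi : ε ≤ x.im := by simp only [hε] at *; linarith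
    calc ε ≤ |x.im| := hxi.trans (le_abs_self _)
    _ = |((l:ℂ) - x).im| := by simp [sub_im, abs_sub_comm]
    _ ≤ ‖(l:ℂ) - x‖ := abs_im_le_norm _
  have key := hasDerivAt_integral_of_dominated_loc_of_deriv_le (μ := ν)
    (F := fun (x : ℂ) (l : ℝ) => 1 / ((l : ℂ) - x))
    (F' := fun (x : ℂ) (l : ℝ) => (((l : ℂ) - x) ^ 2)⁻¹)
    (bound := fun _ => (ε ^ 2)⁻¹) (x₀ := z) (s := Metric.ball z ε) (Metric.ball_mem_nhds z hε2) ?_ ?_ ?_ ?_ (integrable_const _) ?_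
  · exact key.2
  · have hev : ∀ᶠ x in nhds z, x.im ≠ 0 :=
      (isOpen_compl_singleton.preimage Complex.continuous_im).mem_nhds
        (by simpa using hz.ne')
    exact hev.mono fun x hx => (integrable_kernel ν hx).aestronglyMeasurable
  · exact integrable_kernel ν hz.ne'
  · apply Continuous.aestronglyMeasurable
    apply Continuous.inv₀ (by continuity)
    intro l
    intro hc
    have h0 : (l:ℂ) - z = 0 := sq_eq_zero_iff.mp hc
    have h := him z (Metric.mem_ball_self hε2) l
    rw [h0] at h
    simp at h
    nlinarith
  · filter_upwards with l x hx
    have h := him x hx l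
    rw [norm_inv, norm_pow]
    apply inv_anti₀ (by positivity)
    exact pow_le_pow_left₀ hε2.le h 2
  · filter_upwards with l x hx
    have hne : (l:ℂ) - x ≠ 0 := by
      intro hc
      have := him x hx l
      rw [hc] at this; simp at this; nlinarith
    have h1 : HasDerivAt (fun x : ℂ => (l:ℂ) - x) (-1) x := by
      simpa using (hasDerivAt_id x).const_sub (l:ℂ)
    have h2 := h1.inv hne
    simp only [one_div]
    convert h2 using 1
    all_goals first | rfl | (simp; done) | (field_simp)




lemma im_mem_closedBall {c w : ℂ} {R : ℝ} (h : w ∈ Metric.closedBall c R) :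
    |w.im - c.im| ≤ R :=
  le_trans (by simpa [Complex.sub_im] using Complex.abs_im_le_norm (w - c))
    (by rwa [Metric.mem_closedBall, dist_eq_norm] at h)

lemma sg_tendsto_extend (μn : ℕ → Measure ℝ) [∀ n, IsProbabilityMeasure (μn n)]
    (μ : Measure ℝ) [IsProbabilityMeasure μ] (η : ℝ) (hη : 0 < η)
    (hconv : ∀ z : ℂ, η ≤ |z.im| → Tendsto (fun n => sg (μn n) z) atTop (nhds (sg μ z)))
    {z : ℂ} (hz1 : 0 < z.im) :
    Tendsto (fun n => sg (μn n) z) atTop (nhds (sg μ z)) := by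
  rcases le_or_gt η z.im with h | h
  · exact hconv z (by rw [abs_of_pos hz1]; exact h)
  set y := z.im with hy
  set z0 : ℂ := ⟨z.re, 2 * η⟩ with hz0
  have hz0im : z0.im = 2 * η := rfl
  set R : ℝ := 2 * η - y / 2 with hRdef
  have hR : 0 < R := by simp only [hRdef]; linarith
  have hRlt : R < 2 * η := by simp only [hRdef]; linarith
  -- membership in ball with positive imaginary part
  have him_pos : ∀ {ρ : ℝ}, ρ < 2 * η → ∀ w ∈ Metric.closedBall z0 ρ, 2 * η - ρ ≤ w.im := by
    intro ρ hρ w hw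
    have := im_mem_closedBall hw
    rw [hz0im, abs_le] at this
    linarith [this.1]
  -- differentiability on closed balls
  have hdiff : ∀ (ν : Measure ℝ), IsProbabilityMeasure ν → ∀ (ρ : ℝ), ρ < 2 * η →
      DifferentiableOn ℂ (sg ν) (Metric.closedBall z0 ρ) := by
    intro ν hν ρ hρ w hw
    have h1 : 0 < w.im := lt_of_lt_of_le (by linarith) (him_pos hρ w hw)
    exact (sg_hasDerivAt ν h1).differentiableAt.differentiableWithinAt
  -- continuity along circles
  have hcont : ∀ (ν : Measure ℝ), IsProbabilityMeasure ν → ∀ (ρ : ℝ), 0 ≤ ρ → ρ < 2 * η →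
      Continuous fun θ : ℝ => sg ν (circleMap z0 ρ θ) := by
    intro ν hν ρ h0 hρ
    rw [continuous_iff_continuousAt]
    intro θ
    have hmem := circleMap_mem_closedBall z0 h0 θ
    have h1 : 0 < (circleMap z0 ρ θ).im := lt_of_lt_of_le (by linarith) (him_pos hρ _ hmem)
    exact ((sg_hasDerivAt ν h1).differentiableAt.continuousAt).comp
      (continuous_circleMap z0 ρ).continuousAt
  set R' : NNReal := ⟨R, hR.le⟩ with hR'
  set r' : NNReal := ⟨η, hη.le⟩ with hr'
  have hcR : (R' : ℝ) = R := rfl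
  have hcr : (r' : ℝ) = η := rfl
  have hballR : ∀ (ν : Measure ℝ), IsProbabilityMeasure ν →
      HasFPowerSeriesOnBall (sg ν) (cauchyPowerSeries (sg ν) z0 R) z0 R' := by
    intro ν hν
    have := (hdiff ν hν R hRlt)
    rw [← hcR] at this
    exact this.hasFPowerSeriesOnBall (by simp [hR', ← NNReal.coe_lt_coe]; exact hR)
  have hballr : ∀ (ν : Measure ℝ), IsProbabilityMeasure ν →
      HasFPowerSeriesOnBall (sg ν) (cauchyPowerSeries (sg ν) z0 η) z0 r' := by
    intro ν hν
    have := (hdiff ν hν η (by linarith))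
    rw [← hcr] at this
    exact this.hasFPowerSeriesOnBall (by simp [hr', ← NNReal.coe_lt_coe]; exact hη)
  have huniq : ∀ (ν : Measure ℝ), IsProbabilityMeasure ν →
      cauchyPowerSeries (sg ν) z0 R = cauchyPowerSeries (sg ν) z0 η := by
    intro ν hν
    exact (hballR ν hν).hasFPowerSeriesAt.eq_formalMultilinearSeries
      (hballr ν hν).hasFPowerSeriesAt
  -- the evaluation point
  have hvz : z - z0 = (y - 2 * η) * I := by
    apply Complex.ext <;> simp [hz0, hy, Complex.sub_im, Complex.sub_re]
  have hnv : ‖z - z0‖ = 2 * η - y := by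
    rw [hvz, norm_mul]
    simp only [Complex.norm_I, mul_one]
    have hcast : (↑y - 2 * ↑η : ℂ) = ((y - 2 * η : ℝ) : ℂ) := by push_cast; ring
    rw [hcast, Complex.norm_real, Real.norm_eq_abs, abs_of_nonpos (by linarith)]
    ring
  have hvR : ‖z - z0‖ < R := by rw [hnv]; simp only [hRdef]; linarith
  have hv : z ∈ Metric.eball z0 (R' : ENNReal) := by
    rw [Metric.emetric_ball_nnreal, Metric.mem_ball, dist_eq_norm]
    exact hvR
  have hsum : ∀ (ν : Measure ℝ), IsProbabilityMeasure ν →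
      HasSum (fun k => cauchyPowerSeries (sg ν) z0 R k fun _ => z - z0) (sg ν z) := by
    intro ν hν
    exact (hballR ν hν).hasSum_sub hv
  -- now Tannery
  set q : ℝ := ‖z - z0‖ / R with hq
  have hq0 : 0 ≤ q := div_nonneg (norm_nonneg _) hR.le
  have hq1 : q < 1 := (div_lt_one hR).mpr hvR
  set M : ℝ := (y / 2)⁻¹ with hM
  have hM0 : 0 < M := by
    rw [hM]; exact inv_pos.mpr (by linarith)
  -- uniform coefficient bound (radius R)
  have hbd : ∀ (ν : Measure ℝ), IsProbabilityMeasure ν → ∀ k : ℕ,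
      ‖cauchyPowerSeries (sg ν) z0 R k fun _ => z - z0‖ ≤ M * q ^ k := by
    intro ν hν k
    have h1 : ∀ θ : ℝ, ‖sg ν (circleMap z0 R θ)‖ ≤ M := by
      intro θ
      have hmem := circleMap_mem_closedBall z0 hR.le θ
      have h2 : y / 2 ≤ (circleMap z0 R θ).im := by
        have := him_pos hRlt _ hmem
        simp only [hRdef] at this ⊢
        linarith
      have h3 : 0 < (circleMap z0 R θ).im := by linarith
      calc ‖sg ν (circleMap z0 R θ)‖ ≤ |(circleMap z0 R θ).im|⁻¹ := sg_norm_le ν h3.ne'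
      _ ≤ M := by
          rw [hM, abs_of_pos h3]
          exact inv_anti₀ (by linarith) h2
    have h4 : (∫ θ : ℝ in (0)..2 * Real.pi, ‖sg ν (circleMap z0 R θ)‖) ≤ 2 * Real.pi * M := by
      have := intervalIntegral.integral_mono_on (μ := volume) (a := 0) (b := 2 * Real.pi)
        (f := fun θ => ‖sg ν (circleMap z0 R θ)‖) (g := fun _ => M)
        Real.two_pi_pos.le
        (((hcont ν hν R hR.le hRlt).norm).intervalIntegrable _ _)
        (intervalIntegrable_const)
        (fun θ _ => h1 θ)
      simpa using this
    calc ‖cauchyPowerSeries (sg ν) z0 R k fun _ => z - z0‖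
        ≤ ‖cauchyPowerSeries (sg ν) z0 R k‖ * ∏ _i : Fin k, ‖z - z0‖ :=
          (cauchyPowerSeries (sg ν) z0 R k).le_opNorm _
      _ = ‖cauchyPowerSeries (sg ν) z0 R k‖ * ‖z - z0‖ ^ k := by
          simp [Finset.prod_const]
      _ ≤ (((2 * Real.pi)⁻¹ * ∫ θ : ℝ in (0)..2 * Real.pi, ‖sg ν (circleMap z0 R θ)‖) * |R|⁻¹ ^ k)
            * ‖z - z0‖ ^ k := by
          apply mul_le_mul_of_nonneg_right (norm_cauchyPowerSeries_le _ _ _ _)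
            (pow_nonneg (norm_nonneg _) k)
      _ ≤ ((2 * Real.pi)⁻¹ * (2 * Real.pi * M) * |R|⁻¹ ^ k) * ‖z - z0‖ ^ k := by
          apply mul_le_mul_of_nonneg_right _ (pow_nonneg (norm_nonneg _) k)
          apply mul_le_mul_of_nonneg_right _ (pow_nonneg (by positivity) k)
          apply mul_le_mul_of_nonneg_left h4 (by positivity)
      _ = M * q ^ k := by
          rw [abs_of_pos hR]
          field_simp [hq]
          try ring
  -- coefficient convergence (radius η)
  have hcoef : ∀ k : ℕ, Tendsto (fun n => cauchyPowerSeries (sg (μn n)) z0 η k fun _ => z - z0)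
      atTop (nhds (cauchyPowerSeries (sg μ) z0 η k fun _ => z - z0)) := by
    intro k
    simp only [cauchyPowerSeries_apply, circleIntegral, deriv_circleMap]
    have hcont1 : Continuous fun θ : ℝ => circleMap 0 η θ * I :=
      (continuous_circleMap 0 η).mul continuous_const
    have hne : ∀ θ : ℝ, circleMap z0 η θ - z0 ≠ 0 :=
      fun θ => sub_ne_zero.mpr (circleMap_ne_center hη.ne' )
    have hcont2 : Continuous fun θ : ℝ => ((z - z0) / (circleMap z0 η θ - z0)) ^ k := by
      apply Continuous.pow
      exact Continuous.div continuous_const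
        ((continuous_circleMap z0 η).sub continuous_const) hne
    have hcont3 : Continuous fun θ : ℝ => (circleMap z0 η θ - z0)⁻¹ :=
      Continuous.inv₀ ((continuous_circleMap z0 η).sub continuous_const) hne
    apply Filter.Tendsto.const_smul
    apply intervalIntegral.tendsto_integral_filter_of_dominated_convergence
      (bound := fun _ => η * ((‖z - z0‖ / η) ^ k * (η⁻¹ * η⁻¹)))
    · filter_upwards with n
      apply Continuous.aestronglyMeasurable
      exact hcont1.smul (hcont2.smul (hcont3.smul
        (hcont (μn n) inferInstance η hη.le (by linarith))))
    · filter_upwards with n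
      filter_upwards with θ
      intro _
      have hmem := circleMap_mem_closedBall z0 hη.le θ
      have h2 : η ≤ (circleMap z0 η θ).im := by
        have := him_pos (by linarith : η < 2*η) _ hmem
        linarith
      have h3 : 0 < (circleMap z0 η θ).im := by linarith
      have hsub : circleMap z0 η θ - z0 = circleMap 0 η θ := circleMap_sub_center _ _ _
      have habs : ‖circleMap z0 η θ - z0‖ = η := by
        rw [hsub]; simp [norm_circleMap_zero, abs_of_pos hη]
      rw [norm_smul, norm_smul, norm_smul]
      have hd : ‖circleMap 0 η θ * I‖ = η := by
        simp [norm_circleMap_zero, abs_of_pos hη]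
      rw [hd]
      apply mul_le_mul_of_nonneg_left _ hη.le
      have hnq : ‖((z - z0) / (circleMap z0 η θ - z0)) ^ k‖ = (‖z - z0‖ / η) ^ k := by
        rw [norm_pow, norm_div, habs]
      rw [hnq]
      apply mul_le_mul_of_nonneg_left _ (by positivity)
      rw [norm_inv, habs]
      apply mul_le_mul_of_nonneg_left _ (by positivity)
      calc ‖sg (μn n) (circleMap z0 η θ)‖ ≤ |(circleMap z0 η θ).im|⁻¹ :=
            sg_norm_le _ h3.ne'
        _ ≤ η⁻¹ := by rw [abs_of_pos h3]; exact inv_anti₀ hη h2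
    · exact intervalIntegrable_const
    · filter_upwards with θ
      intro _
      have hmem := circleMap_mem_closedBall z0 hη.le θ
      have h2 : η ≤ (circleMap z0 η θ).im := by
        have := him_pos (by linarith : η < 2*η) _ hmem
        linarith
      have habs : η ≤ |(circleMap z0 η θ).im| := le_trans h2 (le_abs_self _)
      exact (((hconv _ habs).const_smul _).const_smul _).const_smul _
  -- assemble
  have heq1 : (fun n => sg (μn n) z)
      = fun n => ∑' k, cauchyPowerSeries (sg (μn n)) z0 R k fun _ => z - z0 := by
    funext n
    exact (hsum (μn n) inferInstance).tsum_eq.symm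
  have heq2 : sg μ z = ∑' k, cauchyPowerSeries (sg μ) z0 R k fun _ => z - z0 :=
    (hsum μ inferInstance).tsum_eq.symm
  rw [heq1, heq2]
  apply tendsto_tsum_of_dominated_convergence (bound := fun k => M * q ^ k)
  · exact (summable_geometric_of_lt_one hq0 hq1).mul_left M
  · intro k
    have h1 : ∀ n, (cauchyPowerSeries (sg (μn n)) z0 R k fun _ => z - z0)
        = cauchyPowerSeries (sg (μn n)) z0 η k fun _ => z - z0 := by
      intro n
      rw [huniq (μn n) inferInstance]
    have h2 : (cauchyPowerSeries (sg μ) z0 R k fun _ => z - z0)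
        = cauchyPowerSeries (sg μ) z0 η k fun _ => z - z0 := by
      rw [huniq μ inferInstance]
    rw [h2]
    exact (hcoef k).congr (fun n => (h1 n).symm)
  · filter_upwards with n k
    exact hbd (μn n) inferInstance k

end PartAB

section PartC
open Metric Real


noncomputable def pk (y lam x : ℝ) : ℝ := y / ((x - lam) ^ 2 + y ^ 2)

lemma pk_nonneg {y : ℝ} (hy : 0 < y) (lam x : ℝ) : 0 ≤ pk y lam x := by
  unfold pk; positivity

lemma pk_eq {y : ℝ} (hy : 0 < y) (lam x : ℝ) :
    pk y lam x = y⁻¹ * (1 + ((x - lam) / y) ^ 2)⁻¹ := by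
  unfold pk
  field_simp
  ring

lemma pk_cont {y : ℝ} (hy : 0 < y) : Continuous fun p : ℝ × ℝ => pk y p.1 p.2 := by
  unfold pk
  apply Continuous.div continuous_const (by fun_prop)
  intro p
  positivity

lemma pk_cont1 {y : ℝ} (hy : 0 < y) (lam : ℝ) : Continuous fun x : ℝ => pk y lam x := by
  unfold pk
  apply Continuous.div continuous_const (by fun_prop)
  intro x
  positivity

lemma integrable_pk {y : ℝ} (hy : 0 < y) (lam : ℝ) : Integrable (pk y lam) := by
  have h1 : Integrable fun x : ℝ => (1 + (x / y) ^ 2)⁻¹ := by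
    have := integrable_inv_one_add_sq.comp_div (R := y) hy.ne'
    simpa using this
  have h2 : Integrable fun x : ℝ => (1 + ((x - lam) / y) ^ 2)⁻¹ := h1.comp_sub_right lam
  have h3 := (h2.const_mul y⁻¹)
  apply h3.congr
  filter_upwards with x
  rw [pk_eq hy]

lemma integral_pk {y : ℝ} (hy : 0 < y) (lam : ℝ) : ∫ x : ℝ, pk y lam x = π := by
  simp_rw [pk_eq hy]
  rw [integral_const_mul]
  have h1 : (∫ x : ℝ, (1 + ((x - lam) / y) ^ 2)⁻¹) = ∫ u : ℝ, (1 + (u / y) ^ 2)⁻¹ :=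
    integral_sub_right_eq_self (fun u : ℝ => (1 + (u / y) ^ 2)⁻¹) lam
  rw [h1]
  have h2 : (∫ u : ℝ, (1 + (u / y) ^ 2)⁻¹) = |y| • ∫ v : ℝ, (1 + v ^ 2)⁻¹ :=
    MeasureTheory.Measure.integral_comp_div (fun v : ℝ => (1 + v ^ 2)⁻¹) y
  rw [h2, integral_univ_inv_one_add_sq, smul_eq_mul, abs_of_pos hy]
  field_simp

lemma integral_pk_Icc {y δ : ℝ} (hy : 0 < y) (hδ : 0 < δ) (lam : ℝ) :
    ∫ x in Set.Icc (lam - δ) (lam + δ), pk y lam x = 2 * Real.arctan (δ / y) := by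
  rw [MeasureTheory.integral_Icc_eq_integral_Ioc,
    ← intervalIntegral.integral_of_le (by linarith)]
  simp_rw [pk_eq hy]
  rw [intervalIntegral.integral_const_mul]
  have h1 : (∫ x in (lam - δ)..(lam + δ), (1 + ((x - lam) / y) ^ 2)⁻¹)
      = ∫ u in (lam - δ - lam)..(lam + δ - lam), (1 + (u / y) ^ 2)⁻¹ :=
    intervalIntegral.integral_comp_sub_right (fun u : ℝ => (1 + (u / y) ^ 2)⁻¹) lam
  rw [h1]
  have h4 : lam - δ - lam = -δ := by ring
  have h5 : lam + δ - lam = δ := by ring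
  rw [h4, h5]
  have h2 : (∫ u in (-δ)..δ, (1 + (u / y) ^ 2)⁻¹)
      = y • ∫ v in (-δ/y)..(δ/y), (1 + v ^ 2)⁻¹ :=
    intervalIntegral.integral_comp_div (fun v : ℝ => (1 + v ^ 2)⁻¹) hy.ne'
  rw [h2]
  rw [integral_inv_one_add_sq]
  rw [neg_div, Real.arctan_neg]
  rw [smul_eq_mul]
  field_simp
  ring

lemma integral_pk_compl {y δ : ℝ} (hy : 0 < y) (hδ : 0 < δ) (lam : ℝ) :
    ∫ x in (Set.Icc (lam - δ) (lam + δ))ᶜ, pk y lam x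
      = π - 2 * Real.arctan (δ / y) := by
  have h := integral_add_compl (measurableSet_Icc (a := lam - δ) (b := lam + δ))
    (integrable_pk hy lam)
  rw [integral_pk hy lam] at h
  rw [integral_pk_Icc hy hδ lam] at h
  linarith

lemma integrable_f_pk {f : ℝ → ℝ} (hfc : Continuous f)
    (hf0 : ∀ x, 0 ≤ f x) (hf1 : ∀ x, f x ≤ 1) {y : ℝ} (hy : 0 < y) (lam : ℝ) :
    Integrable (fun x => f x * pk y lam x) := by
  apply (integrable_pk hy lam).mono'
    (Continuous.aestronglyMeasurable (hfc.mul (pk_cont1 hy lam)))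
  filter_upwards with x
  simp only [Pi.mul_apply]
  rw [Real.norm_eq_abs, abs_mul, _root_.abs_of_nonneg (pk_nonneg hy lam x),
    _root_.abs_of_nonneg (hf0 x)]
  calc f x * pk y lam x ≤ 1 * pk y lam x :=
    mul_le_mul_of_nonneg_right (hf1 x) (pk_nonneg hy lam x)
  _ = pk y lam x := one_mul _

lemma integral_f_pk_nonneg {f : ℝ → ℝ}
    (hf0 : ∀ x, 0 ≤ f x) {y : ℝ} (hy : 0 < y) (lam : ℝ) :
    0 ≤ ∫ x : ℝ, f x * pk y lam x :=
  integral_nonneg fun x => mul_nonneg (hf0 x) (pk_nonneg hy lam x)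

lemma integral_f_pk_le {f : ℝ → ℝ} (hfc : Continuous f)
    (hf0 : ∀ x, 0 ≤ f x) (hf1 : ∀ x, f x ≤ 1) {y : ℝ} (hy : 0 < y) (lam : ℝ) :
    (∫ x : ℝ, f x * pk y lam x) ≤ π := by
  have h1 : (∫ x : ℝ, f x * pk y lam x) ≤ ∫ x : ℝ, pk y lam x := by
    apply integral_mono (integrable_f_pk hfc hf0 hf1 hy lam) (integrable_pk hy lam)
    intro x
    show f x * pk y lam x ≤ pk y lam x
    nlinarith [pk_nonneg hy lam x, hf1 x, hf0 x]
  rw [integral_pk hy lam] at h1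
  exact h1

lemma poisson_pointwise {L : ℝ} (hL : 0 ≤ L) {f : ℝ → ℝ}
    (hfc : Continuous f)
    (hLip : ∀ a b : ℝ, |f a - f b| ≤ L * |a - b|)
    (hf0 : ∀ x, 0 ≤ f x) (hf1 : ∀ x, f x ≤ 1) {y δ : ℝ} (hy : 0 < y) (hδ : 0 < δ) (lam : ℝ) :
    |(∫ x : ℝ, f x * pk y lam x) - π * f lam|
      ≤ L * δ * π + (π - 2 * Real.arctan (δ / y)) := by
  have hK := integrable_pk hy lam
  have hb : ∀ x, |f x - f lam| ≤ 1 := by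
    intro x
    rw [abs_le]
    constructor <;> nlinarith [hf0 x, hf1 x, hf0 lam, hf1 lam]
  have hgi : Integrable (fun x => |f x - f lam| * pk y lam x) := by
    apply hK.mono' (Continuous.aestronglyMeasurable (((hfc.sub continuous_const).abs).mul (pk_cont1 hy lam)))
    filter_upwards with x
    simp only [Pi.mul_apply, Pi.sub_apply]
    rw [Real.norm_eq_abs, abs_mul, _root_.abs_abs, _root_.abs_of_nonneg (pk_nonneg hy lam x)]
    calc |f x - f lam| * pk y lam x ≤ 1 * pk y lam x :=
      mul_le_mul_of_nonneg_right (hb x) (pk_nonneg hy lam x)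
    _ = pk y lam x := one_mul _
  have hfKi : Integrable (fun x => f x * pk y lam x) := integrable_f_pk hfc hf0 hf1 hy lam
  have hconst : π * f lam = ∫ x : ℝ, f lam * pk y lam x := by
    rw [integral_const_mul, integral_pk hy lam]
    ring
  rw [hconst, ← integral_sub hfKi (hK.const_mul _)]
  have hsub : ∀ x : ℝ, f x * pk y lam x - f lam * pk y lam x
      = (f x - f lam) * pk y lam x := fun x => by ring
  simp_rw [hsub]
  calc |∫ x : ℝ, (f x - f lam) * pk y lam x|
      ≤ ∫ x : ℝ, |(f x - f lam) * pk y lam x| := by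
        have := norm_integral_le_integral_norm (μ := volume)
          (fun x : ℝ => (f x - f lam) * pk y lam x)
        simpa only [Real.norm_eq_abs] using this
    _ = ∫ x : ℝ, |f x - f lam| * pk y lam x := by
        congr 1
        funext x
        rw [abs_mul, _root_.abs_of_nonneg (pk_nonneg hy lam x)]
    _ = (∫ x in Set.Icc (lam - δ) (lam + δ), |f x - f lam| * pk y lam x)
        + ∫ x in (Set.Icc (lam - δ) (lam + δ))ᶜ, |f x - f lam| * pk y lam x :=
        (integral_add_compl (measurableSet_Icc) hgi).symm
    _ ≤ L * δ * π + (π - 2 * Real.arctan (δ / y)) := by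
        apply add_le_add
        · calc (∫ x in Set.Icc (lam - δ) (lam + δ), |f x - f lam| * pk y lam x)
              ≤ ∫ x in Set.Icc (lam - δ) (lam + δ), (L * δ) * pk y lam x := by
                apply setIntegral_mono_on hgi.integrableOn
                  ((hK.const_mul _).integrableOn) measurableSet_Icc
                intro x hx
                apply mul_le_mul_of_nonneg_right _ (pk_nonneg hy lam x)
                calc |f x - f lam| ≤ L * |x - lam| := hLip x lam
                _ ≤ L * δ := by
                    apply mul_le_mul_of_nonneg_left _ hL
                    rw [abs_le]
                    rcases hx with ⟨h1, h2⟩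
                    constructor <;> linarith
          _ ≤ ∫ x : ℝ, (L * δ) * pk y lam x := by
                apply setIntegral_le_integral (hK.const_mul _)
                filter_upwards with x
                exact mul_nonneg (by positivity) (pk_nonneg hy lam x)
          _ = L * δ * π := by rw [integral_const_mul, integral_pk hy lam]
        · calc (∫ x in (Set.Icc (lam - δ) (lam + δ))ᶜ, |f x - f lam| * pk y lam x)
              ≤ ∫ x in (Set.Icc (lam - δ) (lam + δ))ᶜ, pk y lam x := by
                apply setIntegral_mono_on hgi.integrableOn hK.integrableOn
                  measurableSet_Icc.compl
                intro x hx
                calc |f x - f lam| * pk y lam x ≤ 1 * pk y lam x :=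
                  mul_le_mul_of_nonneg_right (hb x) (pk_nonneg hy lam x)
                _ = pk y lam x := one_mul _
          _ = π - 2 * Real.arctan (δ / y) := integral_pk_compl hy hδ lam

lemma fubini_pk (ν : Measure ℝ) [IsProbabilityMeasure ν] {f : ℝ → ℝ} (hfc : Continuous f)
    (hf0 : ∀ x, 0 ≤ f x) (hf1 : ∀ x, f x ≤ 1) {y : ℝ} (hy : 0 < y) :
    Integrable (fun x => f x * ∫ lam, pk y lam x ∂ν) volume ∧
    (∫ x : ℝ, f x * ∫ lam, pk y lam x ∂ν)
      = ∫ lam, (∫ x : ℝ, f x * pk y lam x) ∂ν := by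
  set F : ℝ × ℝ → ℝ := fun p => f p.2 * pk y p.1 p.2 with hF
  have hFc : Continuous F := (hfc.comp continuous_snd).mul (pk_cont hy)
  have hFi : Integrable F (ν.prod volume) := by
    rw [integrable_prod_iff hFc.aestronglyMeasurable]
    constructor
    · filter_upwards with lam
      exact integrable_f_pk hfc hf0 hf1 hy lam
    · have hnorm : (fun lam => ∫ x : ℝ, ‖F (lam, x)‖)
          = fun lam => ∫ x : ℝ, f x * pk y lam x := by
        funext lam
        congr 1
        funext x
        rw [Real.norm_eq_abs, abs_mul, _root_.abs_of_nonneg (pk_nonneg hy lam x),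
          _root_.abs_of_nonneg (hf0 x)]
      rw [hnorm]
      apply (integrable_const π).mono'
        (StronglyMeasurable.aestronglyMeasurable
          (hFc.stronglyMeasurable.integral_prod_right'))
      filter_upwards with lam
      rw [Real.norm_eq_abs, _root_.abs_of_nonneg (integral_f_pk_nonneg hf0 hy lam)]
      exact integral_f_pk_le hfc hf0 hf1 hy lam
  constructor
  · have h1 := hFi.integral_prod_right
    apply h1.congr
    filter_upwards with x
    exact integral_const_mul (f x) fun lam => pk y lam x
  · have hswap := integral_integral_swap (f := fun lam x => f x * pk y lam x) hFi
    have hpull : (fun x : ℝ => f x * ∫ lam, pk y lam x ∂ν)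
        = fun x : ℝ => ∫ lam, f x * pk y lam x ∂ν := by
      funext x
      exact (integral_const_mul (f x) fun lam => pk y lam x).symm
    rw [hpull]
    exact hswap.symm

lemma smoothing_bound (ν : Measure ℝ) [IsProbabilityMeasure ν] {L : ℝ} (hL : 0 ≤ L)
    {f : ℝ → ℝ} (hfc : Continuous f)
    (hLip : ∀ a b : ℝ, |f a - f b| ≤ L * |a - b|)
    (hf0 : ∀ x, 0 ≤ f x) (hf1 : ∀ x, f x ≤ 1) {y δ : ℝ} (hy : 0 < y) (hδ : 0 < δ) :
    |(∫ x : ℝ, f x * ∫ lam, pk y lam x ∂ν) - π * ∫ lam, f lam ∂ν|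
      ≤ L * δ * π + (π - 2 * Real.arctan (δ / y)) := by
  rw [(fubini_pk ν hfc hf0 hf1 hy).2]
  have hfint : Integrable f ν := by
    apply (integrable_const (1 : ℝ)).mono' hfc.aestronglyMeasurable
    filter_upwards with x
    rw [Real.norm_eq_abs, _root_.abs_of_nonneg (hf0 x)]
    exact hf1 x
  have hSM : StronglyMeasurable fun lam => ∫ x : ℝ, f x * pk y lam x := by
    have hFc : Continuous fun p : ℝ × ℝ => f p.2 * pk y p.1 p.2 :=
      (hfc.comp continuous_snd).mul (pk_cont hy)
    exact hFc.stronglyMeasurable.integral_prod_right'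
  have hAf_int : Integrable (fun lam => ∫ x : ℝ, f x * pk y lam x) ν := by
    apply (integrable_const π).mono' hSM.aestronglyMeasurable
    filter_upwards with lam
    rw [Real.norm_eq_abs, _root_.abs_of_nonneg (integral_f_pk_nonneg hf0 hy lam)]
    exact integral_f_pk_le hfc hf0 hf1 hy lam
  have hπf : π * ∫ lam, f lam ∂ν = ∫ lam, π * f lam ∂ν := (integral_const_mul π f).symm
  rw [hπf, ← integral_sub hAf_int (hfint.const_mul π)]
  calc |∫ lam, ((∫ x : ℝ, f x * pk y lam x) - π * f lam) ∂ν|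
      ≤ ∫ lam, |(∫ x : ℝ, f x * pk y lam x) - π * f lam| ∂ν := by
        have := norm_integral_le_integral_norm (μ := ν)
          (fun lam => (∫ x : ℝ, f x * pk y lam x) - π * f lam)
        simpa only [Real.norm_eq_abs] using this
    _ ≤ ∫ _lam, (L * δ * π + (π - 2 * Real.arctan (δ / y))) ∂ν := by
        apply integral_mono (hAf_int.sub (hfint.const_mul π)).abs (integrable_const _)
        intro lam
        exact poisson_pointwise hL hfc hLip hf0 hf1 hy hδ lam
    _ = L * δ * π + (π - 2 * Real.arctan (δ / y)) := by simp


lemma H_eq (ν : Measure ℝ) [IsProbabilityMeasure ν] {y : ℝ} (hy : 0 < y) (x : ℝ) :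
    (sg ν (x + y * Complex.I)).im = ∫ lam, pk y lam x ∂ν := by
  have him : ((x : ℂ) + y * Complex.I).im = y := by simp
  have hint := integrable_kernel ν (z := (x : ℂ) + y * Complex.I)
    (by rw [him]; exact hy.ne')
  rw [sg]
  rw [show (∫ l : ℝ, 1 / ((l : ℂ) - ((x : ℂ) + y * Complex.I)) ∂ν).im
      = ∫ l : ℝ, (1 / ((l : ℂ) - ((x : ℂ) + y * Complex.I))).im ∂ν from by
    have := (Complex.imCLM.integral_comp_comm hint).symm
    simpa using this]
  congr 1
  funext lam
  rw [one_div, Complex.inv_im]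
  have h1 : ((lam : ℂ) - ((x : ℂ) + y * Complex.I)).im = -y := by simp
  have h2 : ((lam : ℂ) - ((x : ℂ) + y * Complex.I)).re = lam - x := by simp
  rw [Complex.normSq_apply, h1, h2]
  simp only [pk]
  have hd : (lam - x) * (lam - x) + -y * -y = (x - lam) ^ 2 + y ^ 2 := by ring
  rw [hd, neg_neg]

lemma H_cont (ν : Measure ℝ) [IsProbabilityMeasure ν] {y : ℝ} (hy : 0 < y) :
    Continuous fun x : ℝ => (sg ν ((x : ℂ) + y * Complex.I)).im := by
  rw [continuous_iff_continuousAt]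
  intro x
  have him : ((x : ℂ) + y * Complex.I).im = y := by simp
  have h1 : ContinuousAt (sg ν) ((x : ℂ) + y * Complex.I) :=
    (sg_hasDerivAt ν (by rw [him]; exact hy)).differentiableAt.continuousAt
  have h2 : ContinuousAt (fun x : ℝ => (x : ℂ) + y * Complex.I) x :=
    (Complex.continuous_ofReal.add continuous_const).continuousAt
  have h3 : ContinuousAt (fun x : ℝ => sg ν ((x : ℂ) + y * Complex.I)) x :=
    ContinuousAt.comp (f := fun x : ℝ => (x : ℂ) + y * Complex.I) (g := sg ν) h1 h2
  exact (Complex.continuous_im.continuousAt).comp h3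

lemma eventually_measure_lower (μn : ℕ → Measure ℝ) [∀ n, IsProbabilityMeasure (μn n)]
    (μ : Measure ℝ) [IsProbabilityMeasure μ]
    (hext : ∀ z : ℂ, 0 < z.im → Tendsto (fun n => sg (μn n) z) atTop (nhds (sg μ z)))
    {G : Set ℝ} (hG : IsOpen G) {ε : ℝ} (hε : 0 < ε) :
    ∀ᶠ n in atTop, (μ G).toReal - ε ≤ ((μn n) G).toReal := by
  rcases Set.eq_empty_or_nonempty Gᶜ with hGc | hGc
  · have hGuniv : G = Set.univ := by
      rw [← Set.compl_empty, ← hGc, compl_compl]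
    filter_upwards with n
    rw [hGuniv]
    simp [measure_univ]
    linarith
  set e := ε / 6 with he
  have he0 : 0 < e := by positivity
  set d : ℝ → ℝ := fun x => Metric.infDist x Gᶜ with hd
  have hdc : Continuous d := Metric.continuous_infDist_pt Gᶜ
  set Us : ℕ → Set ℝ := fun k => {x | 1 / ((k : ℝ) + 1) < d x} with hUs
  have hUo : ∀ k, IsOpen (Us k) := fun k => isOpen_lt continuous_const hdc
  have hUmono : Monotone Us := by
    intro a b hab x hx
    simp only [hUs, Set.mem_setOf_eq] at *
    have : 1 / ((b : ℝ) + 1) ≤ 1 / ((a : ℝ) + 1) := by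
      apply one_div_le_one_div_of_le (by positivity)
      exact_mod_cast add_le_add_left (Nat.cast_le.mpr hab) 1
    linarith
  have hUsub : ∀ k, Us k ⊆ G := by
    intro k x hx
    simp only [hUs, Set.mem_setOf_eq] at hx
    by_contra hxG
    have : d x = 0 := Metric.infDist_zero_of_mem hxG
    rw [this] at hx
    have : (0:ℝ) < 1 / ((k : ℝ) + 1) := by positivity
    linarith
  have hUG : (⋃ k, Us k) = G := by
    apply Set.Subset.antisymm (Set.iUnion_subset hUsub)
    intro x hx
    have hxc : x ∉ Gᶜ := fun hc => hc hx
    have hpos : 0 < d x :=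
      (hG.isClosed_compl.notMem_iff_infDist_pos hGc).mp hxc
    obtain ⟨k, hk⟩ := exists_nat_one_div_lt hpos
    exact Set.mem_iUnion.mpr ⟨k, hk⟩
  have htend : Tendsto (fun k => μ (Us k)) atTop (nhds (μ G)) := by
    rw [← hUG]
    exact tendsto_measure_iUnion_atTop hUmono
  have htoReal : Tendsto (fun k => (μ (Us k)).toReal) atTop (nhds (μ G).toReal) :=
    (ENNReal.tendsto_toReal (measure_ne_top μ G)).comp htend
  have hev := htoReal.eventually (eventually_gt_nhds
    (show (μ G).toReal - e < (μ G).toReal by linarith))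
  obtain ⟨k, hk⟩ := hev.exists
  set L : ℝ := (k : ℝ) + 1 with hLdef
  have hL0 : 0 < L := by positivity
  set f : ℝ → ℝ := fun x => min 1 (L * d x) with hf
  have hfc : Continuous f := continuous_const.min (continuous_const.mul hdc)
  have hf0 : ∀ x, 0 ≤ f x := fun x =>
    le_min zero_le_one (mul_nonneg hL0.le Metric.infDist_nonneg)
  have hf1 : ∀ x, f x ≤ 1 := fun x => min_le_left _ _
  have hmin_lip : ∀ u v : ℝ, |min 1 u - min 1 v| ≤ |u - v| := by
    intro u v
    have h1 := le_abs_self (u - v)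
    have h2 := neg_abs_le (u - v)
    rw [abs_le]
    rw [min_def, min_def]
    split_ifs <;> constructor <;> linarith
  have hdLip : ∀ a b : ℝ, |d a - d b| ≤ |a - b| := by
    intro a b
    have h1 := Metric.infDist_le_infDist_add_dist (x := a) (y := b) (s := Gᶜ)
    have h2 := Metric.infDist_le_infDist_add_dist (x := b) (y := a) (s := Gᶜ)
    rw [dist_comm] at h2
    rw [Real.dist_eq] at h1 h2
    rw [abs_le]
    have h3 := le_abs_self (a - b)
    have h4 := neg_abs_le (a - b)
    constructor <;> [linarith; linarith]
  have hLip : ∀ a b : ℝ, |f a - f b| ≤ L * |a - b| := by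
    intro a b
    calc |f a - f b| ≤ |L * d a - L * d b| := hmin_lip _ _
    _ = L * |d a - d b| := by rw [← mul_sub, abs_mul, _root_.abs_of_pos hL0]
    _ ≤ L * |a - b| := mul_le_mul_of_nonneg_left (hdLip a b) hL0.le
  -- integrability of f against probability measures
  have hfint : ∀ (ν : Measure ℝ), IsProbabilityMeasure ν → Integrable f ν := by
    intro ν hν
    apply (integrable_const (1 : ℝ)).mono' hfc.aestronglyMeasurable
    filter_upwards with x
    rw [Real.norm_eq_abs, _root_.abs_of_nonneg (hf0 x)]
    exact hf1 x
  -- indicator comparisons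
  have hind1 : ∀ (ν : Measure ℝ), IsProbabilityMeasure ν →
      ∫ x, f x ∂ν ≤ (ν G).toReal := by
    intro ν hν
    have hle : ∀ x, f x ≤ Set.indicator G (fun _ => (1:ℝ)) x := by
      intro x
      by_cases hx : x ∈ G
      · rw [Set.indicator_of_mem hx]
        exact hf1 x
      · rw [Set.indicator_of_notMem hx]
        have : d x = 0 := Metric.infDist_zero_of_mem hx
        simp [hf, this]
    calc ∫ x, f x ∂ν ≤ ∫ x, Set.indicator G (fun _ => (1:ℝ)) x ∂ν :=
          integral_mono (hfint ν hν)
            ((integrable_const (1:ℝ)).indicator hG.measurableSet) hle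
    _ = (ν G).toReal := by
        rw [integral_indicator hG.measurableSet]
        simp [measureReal_def]
  have hind2 : (μ (Us k)).toReal ≤ ∫ x, f x ∂μ := by
    have hle : ∀ x, Set.indicator (Us k) (fun _ => (1:ℝ)) x ≤ f x := by
      intro x
      by_cases hx : x ∈ Us k
      · rw [Set.indicator_of_mem hx]
        simp only [hUs, Set.mem_setOf_eq] at hx
        have h1 : 1 ≤ L * d x := by
          rw [hLdef]
          rw [div_lt_iff₀ (by positivity : (0:ℝ) < (k:ℝ)+1)] at hx
          linarith
        simp only [hf]
        exact le_min le_rfl h1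
      · rw [Set.indicator_of_notMem hx]
        exact hf0 x
    calc (μ (Us k)).toReal
        = ∫ x, Set.indicator (Us k) (fun _ => (1:ℝ)) x ∂μ := by
          rw [integral_indicator (hUo k).measurableSet]
          simp [measureReal_def]
    _ ≤ ∫ x, f x ∂μ :=
          integral_mono ((integrable_const (1:ℝ)).indicator (hUo k).measurableSet)
            (hfint μ inferInstance) hle
  -- choose δ and y
  set δ : ℝ := e / (L + 1) with hδdef
  have hδ0 : 0 < δ := by positivity
  have hLδ : L * δ ≤ e := by
    rw [hδdef, mul_div_assoc']
    rw [div_le_iff₀ (by positivity : (0:ℝ) < L + 1)]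
    nlinarith
  have htail : ∃ y : ℝ, 0 < y ∧ π - 2 * Real.arctan (δ / y) ≤ e := by
    have hA : Tendsto (fun m : ℕ => δ * ((m : ℝ) + 1)) atTop atTop := by
      apply Tendsto.const_mul_atTop hδ0
      exact tendsto_atTop_add_const_right atTop 1 tendsto_natCast_atTop_atTop
    have hB : Tendsto (fun m : ℕ => Real.arctan (δ * ((m : ℝ) + 1))) atTop (nhds (π / 2)) :=
      (tendsto_nhds_of_tendsto_nhdsWithin Real.tendsto_arctan_atTop).comp hA
    have hC : Tendsto (fun m : ℕ => π - 2 * Real.arctan (δ * ((m : ℝ) + 1))) atTop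
        (nhds 0) := by
      have h0 : π - 2 * (π / 2) = 0 := by ring
      rw [← h0]
      exact tendsto_const_nhds.sub (hB.const_mul 2)
    have := hC.eventually (eventually_le_nhds he0)
    obtain ⟨m, hm⟩ := this.exists
    refine ⟨1 / ((m : ℝ) + 1), by positivity, ?_⟩
    have hrw : δ / (1 / ((m : ℝ) + 1)) = δ * ((m : ℝ) + 1) := by
      field_simp
    rw [hrw]
    exact hm
  obtain ⟨y, hy, htail⟩ := htail
  -- the smoothed quantities
  set H : ℝ → ℝ := fun x => ∫ lam, pk y lam x ∂μ with hH
  set Hn : ℕ → ℝ → ℝ := fun n x => ∫ lam, pk y lam x ∂(μn n) with hHn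
  set A : ℝ := ∫ x : ℝ, f x * H x with hA
  set An : ℕ → ℝ := fun n => ∫ x : ℝ, f x * Hn n x with hAn
  set B : ℝ := L * δ * π + (π - 2 * Real.arctan (δ / y)) with hB
  have hsmooth : ∀ (ν : Measure ℝ), IsProbabilityMeasure ν →
      |(∫ x : ℝ, f x * ∫ lam, pk y lam x ∂ν) - π * ∫ lam, f lam ∂ν| ≤ B :=
    fun ν hν => smoothing_bound ν hL0.le hfc hLip hf0 hf1 hy hδ0
  have hBe : B ≤ π * e + π * e := by
    have h1 : L * δ * π ≤ e * π :=
      mul_le_mul_of_nonneg_right hLδ Real.pi_pos.le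
    have h2 : e * 1 ≤ e * π := by
      apply mul_le_mul_of_nonneg_left _ he0.le
      linarith [Real.pi_gt_three]
    rw [hB]
    rw [mul_one] at h2
    linarith
  -- integrability
  have hfH_int : ∀ (ν : Measure ℝ), IsProbabilityMeasure ν →
      Integrable (fun x => f x * ∫ lam, pk y lam x ∂ν) volume :=
    fun ν hν => (fubini_pk ν hfc hf0 hf1 hy).1
  have hfH_nonneg : ∀ (ν : Measure ℝ), ∀ x : ℝ,
      0 ≤ f x * ∫ lam, pk y lam x ∂ν := fun ν x =>
    mul_nonneg (hf0 x) (integral_nonneg fun lam => pk_nonneg hy lam x)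
  -- pointwise convergence of Hn
  have hHlim : ∀ x : ℝ, Tendsto (fun n => Hn n x) atTop (nhds (H x)) := by
    intro x
    have him : ((x : ℂ) + y * Complex.I).im = y := by simp
    have h1 := hext ((x : ℂ) + y * Complex.I) (by rw [him]; exact hy)
    have h2 : Tendsto (fun n => (sg (μn n) ((x : ℂ) + y * Complex.I)).im) atTop
        (nhds ((sg μ ((x : ℂ) + y * Complex.I)).im)) :=
      (Complex.continuous_im.continuousAt.tendsto).comp h1
    have h3 := (H_eq μ hy x) ▸ h2
    exact h3.congr fun n => H_eq (μn n) hy x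
  -- continuity of Hn, H
  have hH_cont : ∀ (ν : Measure ℝ), IsProbabilityMeasure ν →
      Continuous fun x : ℝ => ∫ lam, pk y lam x ∂ν := by
    intro ν hν
    have h1 := H_cont ν hy
    apply h1.congr
    intro x
    exact H_eq ν hy x
  -- Fatou
  have hfatou : (∫⁻ x : ℝ, ENNReal.ofReal (f x * H x)) ≤
      Filter.liminf (fun n => ∫⁻ x : ℝ, ENNReal.ofReal (f x * Hn n x)) atTop := by
    have hpt : ∀ x : ℝ, ENNReal.ofReal (f x * H x)
        = Filter.liminf (fun n => ENNReal.ofReal (f x * Hn n x)) atTop := by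
      intro x
      have h1 : Tendsto (fun n => f x * Hn n x) atTop (nhds (f x * H x)) :=
        tendsto_const_nhds.mul (hHlim x)
      have h2 : Tendsto (fun n => ENNReal.ofReal (f x * Hn n x)) atTop
          (nhds (ENNReal.ofReal (f x * H x))) :=
        (ENNReal.continuous_ofReal.continuousAt.tendsto).comp h1
      exact h2.liminf_eq.symm
    calc (∫⁻ x : ℝ, ENNReal.ofReal (f x * H x))
        = ∫⁻ x : ℝ, Filter.liminf (fun n => ENNReal.ofReal (f x * Hn n x)) atTop := by
          apply lintegral_congr
          intro x
          exact hpt x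
    _ ≤ Filter.liminf (fun n => ∫⁻ x : ℝ, ENNReal.ofReal (f x * Hn n x)) atTop := by
          apply lintegral_liminf_le
          intro n
          exact (hfc.mul (hH_cont (μn n) inferInstance)).measurable.ennreal_ofReal
  -- convert to real statements
  have hofReal : ∀ (ν : Measure ℝ), IsProbabilityMeasure ν →
      ENNReal.ofReal (∫ x : ℝ, f x * ∫ lam, pk y lam x ∂ν)
        = ∫⁻ x : ℝ, ENNReal.ofReal (f x * ∫ lam, pk y lam x ∂ν) := fun ν hν =>
    ofReal_integral_eq_lintegral_ofReal (hfH_int ν hν)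
      (Filter.Eventually.of_forall (hfH_nonneg ν))
  have hevA : ∀ᶠ n in atTop, A - π * e ≤ An n := by
    by_cases hcase : A - π * e < 0
    · filter_upwards with n
      have : 0 ≤ An n := integral_nonneg (hfH_nonneg (μn n))
      linarith
    · push_neg at hcase
      have hApos : 0 < A := by
        have : 0 < π * e := by positivity
        linarith
      have hlt : ENNReal.ofReal (A - π * e) < ∫⁻ x : ℝ, ENNReal.ofReal (f x * H x) := by
        rw [← hofReal μ inferInstance]
        apply ENNReal.ofReal_lt_ofReal_iff hApos |>.mpr
        have : 0 < π * e := by positivity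
        linarith
      have hlt2 := lt_of_lt_of_le hlt hfatou
      have hev2 := Filter.eventually_lt_of_lt_liminf hlt2
      filter_upwards [hev2] with n hn
      rw [← hofReal (μn n) inferInstance] at hn
      have := (ENNReal.ofReal_lt_ofReal_iff_of_nonneg hcase).mp hn
      exact this.le
  -- final assembly
  filter_upwards [hevA] with n hn
  have habs1 := abs_le.mp (hsmooth (μn n) inferInstance)
  have habs2 := abs_le.mp (hsmooth μ inferInstance)
  have s1 : π * ((μ G).toReal - e) ≤ π * (μ (Us k)).toReal :=
    mul_le_mul_of_nonneg_left (by linarith) Real.pi_pos.le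
  have s2 : π * (μ (Us k)).toReal ≤ π * ∫ x, f x ∂μ :=
    mul_le_mul_of_nonneg_left hind2 Real.pi_pos.le
  have s6 : π * ∫ x, f x ∂(μn n) ≤ π * ((μn n) G).toReal :=
    mul_le_mul_of_nonneg_left (hind1 (μn n) inferInstance) Real.pi_pos.le
  have hfinal : π * ((μ G).toReal - ε) ≤ π * ((μn n) G).toReal := by
    have hεe : ε = 6 * e := by rw [he]; ring
    nlinarith [Real.pi_pos]
  exact le_of_mul_le_mul_left hfinal Real.pi_pos

end PartC

section Conj
open Complex

lemma sg_conj (ν : Measure ℝ) [IsProbabilityMeasure ν] (z : ℂ) :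
    sg ν ((starRingEnd ℂ) z) = (starRingEnd ℂ) (sg ν z) := by
  rw [sg, sg, ← integral_conj]
  congr 1
  funext l
  rw [map_div₀, map_one, map_sub, Complex.conj_ofReal]

lemma sg_tendsto_all (μn : ℕ → Measure ℝ) [∀ n, IsProbabilityMeasure (μn n)]
    (μ : Measure ℝ) [IsProbabilityMeasure μ] (η : ℝ) (hη : 0 < η)
    (hconv : ∀ z : ℂ, η ≤ |z.im| → Tendsto (fun n => sg (μn n) z) atTop (nhds (sg μ z)))
    {z : ℂ} (hz : z.im ≠ 0) :
    Tendsto (fun n => sg (μn n) z) atTop (nhds (sg μ z)) := by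
  rcases hz.lt_or_gt with hneg | hpos
  · have hz' : 0 < ((starRingEnd ℂ) z).im := by
      rw [Complex.conj_im]
      linarith
    have h1 := sg_tendsto_extend μn μ η hη hconv hz'
    have h2 : Tendsto (fun n => (starRingEnd ℂ) (sg (μn n) ((starRingEnd ℂ) z)))
        atTop (nhds ((starRingEnd ℂ) (sg μ ((starRingEnd ℂ) z)))) :=
      (Complex.continuous_conj.continuousAt.tendsto).comp h1
    have h3 : ∀ (ν : Measure ℝ) [IsProbabilityMeasure ν],
        (starRingEnd ℂ) (sg ν ((starRingEnd ℂ) z)) = sg ν z := by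
      intro ν _
      rw [← sg_conj ν ((starRingEnd ℂ) z), Complex.conj_conj]
    rw [h3 μ] at h2
    exact h2.congr fun n => h3 (μn n)
  · exact sg_tendsto_extend μn μ η hη hconv hpos

end Conj


/-- if the Stieltjes transforms `g_n` of probability measures `μ_n` converge
to the Stieltjes transform `w` of a probability measure `μ` for every `z` with
`|Im z| ≥ η`, then they converge for every nonreal `z`, and `μ_n` converges weakly
to `μ`. -/
theorem stieltjes_convergence_extends (μn : ℕ → Measure ℝ)
    [∀ n, IsProbabilityMeasure (μn n)] (μ : Measure ℝ) [IsProbabilityMeasure μ]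
    (η : ℝ) (hη : 0 < η)
    (hconv : ∀ z : ℂ, η ≤ |z.im| →
      Tendsto (fun n => ∫ l : ℝ, 1 / ((l : ℂ) - z) ∂(μn n)) atTop
        (nhds (∫ l : ℝ, 1 / ((l : ℂ) - z) ∂μ))) :
    (∀ z : ℂ, z.im ≠ 0 →
      Tendsto (fun n => ∫ l : ℝ, 1 / ((l : ℂ) - z) ∂(μn n)) atTop
        (nhds (∫ l : ℝ, 1 / ((l : ℂ) - z) ∂μ))) ∧
    ∀ f : BoundedContinuousFunction ℝ ℝ,
      Tendsto (fun n => ∫ x, f x ∂(μn n)) atTop (nhds (∫ x, f x ∂μ)) := by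
  have hconv' : ∀ z : ℂ, η ≤ |z.im| →
      Tendsto (fun n => sg (μn n) z) atTop (nhds (sg μ z)) := hconv
  have hext : ∀ z : ℂ, z.im ≠ 0 →
      Tendsto (fun n => sg (μn n) z) atTop (nhds (sg μ z)) :=
    fun z hz => sg_tendsto_all μn μ η hη hconv' hz
  refine ⟨fun z hz => hext z hz, ?_⟩
  have hext' : ∀ z : ℂ, 0 < z.im →
      Tendsto (fun n => sg (μn n) z) atTop (nhds (sg μ z)) :=
    fun z hz => hext z (ne_of_gt hz)
  set P : ℕ → ProbabilityMeasure ℝ := fun n => ⟨μn n, inferInstance⟩ with hP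
  set Q : ProbabilityMeasure ℝ := ⟨μ, inferInstance⟩ with hQ
  have hopen : ∀ G, IsOpen G → Q G ≤ atTop.liminf (fun n => P n G) := by
    intro G hG
    have hcob : (atTop : Filter ℕ).IsCoboundedUnder (· ≥ ·) (fun n => P n G) :=
      Filter.IsBoundedUnder.isCoboundedUnder_ge
        ⟨1, Filter.eventually_map.2 (Filter.Eventually.of_forall fun n =>
          (P n).apply_le_one G)⟩
    by_contra hlt
    push_neg at hlt
    obtain ⟨c, hc1, hc2⟩ := exists_between hlt
    have hcR : (c : ℝ) < (μ G).toReal := by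
      have := NNReal.coe_lt_coe.mpr hc2
      exact this
    have hev := eventually_measure_lower μn μ hext' hG
      (ε := (μ G).toReal - (c : ℝ)) (by linarith)
    have hlb : ∀ᶠ n in atTop, c ≤ P n G := by
      filter_upwards [hev] with n hn
      rw [← NNReal.coe_le_coe]
      show (c : ℝ) ≤ ((μn n G).toNNReal : ℝ)
      have h2 : ((μn n G).toNNReal : ℝ) = (μn n G).toReal := rfl
      rw [h2]
      linarith
    have := Filter.le_liminf_of_le hcob hlb
    exact absurd this (not_le.mpr hc1)
  have htendsto := MeasureTheory.tendsto_of_forall_isOpen_le_liminf hopen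
  intro f
  exact MeasureTheory.ProbabilityMeasure.tendsto_iff_forall_integral_tendsto.mp htendsto f
end
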